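/- arXiv:0805.1088 — 8 statements merged into one kernel-verified Lean document; each statement's English description precedes it below -/
import Mathlib

section
/- For all positive integers K and N, the fractional stable set polytope of the enhanced conflict graph G_{K,N} is contained in ((2K-1)/K) times its stable set polytope, i.e., QSTAB(G_{K,N}) ⊆ ((2K-1)/K)·STAB(G_{K,N}). -/
open SimpleGraph Pointwise

/-- Vertex set of the enhanced conflict graph `G_{K,N}`: `(false, i, j)` is the unicast vertex
`u_{ij}` (input `i`, output `j`), and `(true, i, j)` is the broadcast (subflow) vertex `b_{ij}`. -/
abbrev CGVert (K N : ℕ) := Bool × Fin K × Fin N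

/-- The enhanced conflict graph `G_{K,N}` of a `K × N` switch with unicast and broadcast traffic:
two distinct vertices are adjacent iff they share an input and at least one of them is a unicast,
or they share an output and come from different inputs. -/
def ECG (K N : ℕ) : SimpleGraph (CGVert K N) where
  Adj v w := v ≠ w ∧
    ((v.2.1 = w.2.1 ∧ (v.1 = false ∨ w.1 = false)) ∨
     (v.2.2 = w.2.2 ∧ v.2.1 ≠ w.2.1))
  symm := ⟨by
    rintro v w ⟨hne, h⟩
    refine ⟨hne.symm, ?_⟩
    rcases h with ⟨h1, h2⟩ | ⟨h1, h2⟩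
    · exact Or.inl ⟨h1.symm, h2.symm⟩
    · exact Or.inr ⟨h1.symm, h2.symm⟩⟩
  loopless := ⟨fun v h => h.1 rfl⟩

/-- The stable set polytope of a graph: the convex hull of the 0/1 indicator vectors of the
independent (stable) sets. -/
def STAB {V : Type*} (G : SimpleGraph V) : Set (V → ℝ) :=
  convexHull ℝ {x | ∃ S : Set V, (∀ v ∈ S, ∀ w ∈ S, ¬ G.Adj v w) ∧
    x = S.indicator (fun _ => (1 : ℝ))}

/-- The fractional stable set polytope of a graph: nonnegative vectors whose sum over every
clique is at most `1`. -/
def QSTAB {V : Type*} (G : SimpleGraph V) : Set (V → ℝ) :=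
  {x | (∀ v, 0 ≤ x v) ∧ ∀ Q : Finset V, G.IsClique (Q : Set V) → ∑ v ∈ Q, x v ≤ 1}

/-- A graph is perfect if every induced subgraph has chromatic number equal to its clique
number. -/
def SimpleGraph.IsPerfect {V : Type*} (G : SimpleGraph V) : Prop :=
  ∀ S : Set V, (G.induce S).chromaticNumber = ((G.induce S).cliqueNum : ℕ∞)

/-- A graph has an odd hole if some induced subgraph is a chordless cycle of odd length at
least 5. -/
def SimpleGraph.HasOddHole {V : Type*} (G : SimpleGraph V) : Prop :=
  ∃ (n : ℕ) (S : Set V), 5 ≤ n ∧ Odd n ∧ Nonempty (G.induce S ≃g cycleGraph n)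


section Aux
open Finset


/-- Hall step: a positive entry selecting permutation. -/
lemma exists_perm_pos {V : Type*} [Fintype V] [DecidableEq V] (d : ℕ) (M : V → V → ℕ)
    (hr : ∀ v, ∑ w, M v w = d + 1) (hc : ∀ w, ∑ v, M v w = d + 1) :
    ∃ π : Equiv.Perm V, ∀ v, 0 < M v (π v) := by
  classical
  have hall : ∀ s : Finset V, s.card ≤ (s.biUnion fun v => univ.filter fun w => 0 < M v w).card := by
    intro s
    set B := s.biUnion fun v => univ.filter fun w => 0 < M v w with hB
    have key : (d + 1) * s.card ≤ (d + 1) * B.card := by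
      calc (d + 1) * s.card = ∑ v ∈ s, (d+1) := by rw [sum_const, smul_eq_mul, mul_comm]
        _ = ∑ v ∈ s, ∑ w, M v w := by
            apply sum_congr rfl; intro v _; rw [hr]
        _ = ∑ v ∈ s, ∑ w ∈ univ.filter fun w => 0 < M v w, M v w := by
            apply sum_congr rfl; intro v _
            rw [sum_filter_of_ne]; intro w _ h; omega
        _ ≤ ∑ v ∈ s, ∑ w ∈ B, M v w := by
            apply sum_le_sum; intro v hv
            apply sum_le_sum_of_subset
            intro w hw; exact mem_biUnion.2 ⟨v, hv, hw⟩
        _ = ∑ w ∈ B, ∑ v ∈ s, M v w := Finset.sum_comm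
        _ ≤ ∑ w ∈ B, ∑ v, M v w := by
            apply sum_le_sum; intro w _
            exact sum_le_sum_of_subset (subset_univ s)
        _ = ∑ w ∈ B, (d+1) := by apply sum_congr rfl; intro w _; rw [hc]
        _ = (d+1) * B.card := by rw [sum_const, smul_eq_mul, mul_comm]
    exact Nat.le_of_mul_le_mul_left key (Nat.succ_pos d)
  obtain ⟨f, hfinj, hf⟩ := (Finset.all_card_le_biUnion_card_iff_exists_injective _).1 hall
  have hbij : Function.Bijective f := Finite.injective_iff_bijective.1 hfinj
  refine ⟨Equiv.ofBijective f hbij, fun v => ?_⟩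
  have := hf v
  simpa using (mem_filter.1 this).2

/-- Integer Birkhoff: decompose into permutations. -/
lemma birkhoff_nat {V : Type*} [Fintype V] [DecidableEq V] (D : ℕ) (M : V → V → ℕ)
    (hr : ∀ v, ∑ w, M v w = D) (hc : ∀ w, ∑ v, M v w = D) :
    ∃ σ : Fin D → Equiv.Perm V, ∀ v w,
      (univ.filter fun t => σ t v = w).card = M v w := by
  classical
  induction D generalizing M with
  | zero =>
      refine ⟨Fin.elim0, fun v w => ?_⟩
      have h1 : M v w = 0 := by
        have := hr v
        have : M v w ≤ 0 := this ▸ Finset.single_le_sum (f := fun w => M v w) (fun _ _ => Nat.zero_le _) (mem_univ w)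
        omega
      simp [h1, Finset.filter_eq_empty_iff]
  | succ d IH =>
      obtain ⟨π, hπ⟩ := exists_perm_pos d M hr hc
      set M' : V → V → ℕ := fun v w => M v w - (if w = π v then 1 else 0) with hM'
      have hsplit : ∀ v w, M v w = M' v w + (if w = π v then 1 else 0) := by
        intro v w
        by_cases h : w = π v
        · subst h; have := hπ v; simp [hM']; omega
        · simp [hM', h]
      have hr' : ∀ v, ∑ w, M' v w = d := by
        intro v
        have : ∑ w, M v w = (∑ w, M' v w) + ∑ w, (if w = π v then 1 else 0) := by
          rw [← sum_add_distrib]; exact sum_congr rfl fun w _ => hsplit v w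
        rw [hr v] at this
        simp [Finset.sum_ite_eq' univ (π v) (fun _ => 1)] at this
        omega
      have hc' : ∀ w, ∑ v, M' v w = d := by
        intro w
        have e1 : ∑ v, (if w = π v then 1 else 0) = 1 := by
          have : ∀ v, (if w = π v then (1:ℕ) else 0) = if v = π.symm w then 1 else 0 := by
            intro v
            congr 1
            simp [Equiv.eq_symm_apply, eq_comm]
          rw [funext this]
          simp [Finset.sum_ite_eq' univ (π.symm w) (fun _ => 1)]
        have : ∑ v, M v w = (∑ v, M' v w) + ∑ v, (if w = π v then 1 else 0) := by
          rw [← sum_add_distrib]; exact sum_congr rfl fun v _ => hsplit v w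
        rw [hc w, e1] at this
        omega
      obtain ⟨σ', hσ'⟩ := IH M' hr' hc'
      refine ⟨Fin.cons π σ', fun v w => ?_⟩
      have htail := hσ' v w
      rw [Finset.card_filter] at htail ⊢
      rw [Fin.sum_univ_succ]
      simp only [Fin.cons_zero, Fin.cons_succ]
      rw [htail, hsplit v w]
      by_cases h : π v = w
      · simp [h]; omega
      · have h' : ¬ (w = π v) := fun hh => h hh.symm
        simp [h, h']

lemma exists_unicast_schedule (K N D : ℕ) (u : Fin K → Fin N → ℕ)
    (hrow : ∀ i, ∑ j, u i j ≤ D) (hcol : ∀ j, ∑ i, u i j ≤ D) :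
    ∃ σ : Fin D → Equiv.Perm (Fin K ⊕ Fin N),
      ∀ i j, (univ.filter fun t => σ t (Sum.inl i) = Sum.inr j).card = u i j := by
  classical
  set M : (Fin K ⊕ Fin N) → (Fin K ⊕ Fin N) → ℕ := fun v w =>
    match v, w with
    | Sum.inl i, Sum.inl i' => if i = i' then D - ∑ j, u i j else 0
    | Sum.inl i, Sum.inr j => u i j
    | Sum.inr j, Sum.inl i => u i j
    | Sum.inr j, Sum.inr j' => if j = j' then D - ∑ i, u i j else 0
    with hM
  have hr : ∀ v, ∑ w, M v w = D := by
    intro v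
    cases v with
    | inl i =>
        rw [Fintype.sum_sum_type]
        have h1 : ∑ i' : Fin K, M (Sum.inl i) (Sum.inl i') = D - ∑ j, u i j := by
          simp [hM, Finset.sum_ite_eq univ i (fun _ => D - ∑ j, u i j)]
        have h2 : ∑ j : Fin N, M (Sum.inl i) (Sum.inr j) = ∑ j, u i j := rfl
        rw [h1, h2]; have := hrow i; omega
    | inr j =>
        rw [Fintype.sum_sum_type]
        have h1 : ∑ i : Fin K, M (Sum.inr j) (Sum.inl i) = ∑ i, u i j := rfl
        have h2 : ∑ j' : Fin N, M (Sum.inr j) (Sum.inr j') = D - ∑ i, u i j := by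
          simp [hM, Finset.sum_ite_eq univ j (fun _ => D - ∑ i, u i j)]
        rw [h1, h2]; have := hcol j; omega
  have hc : ∀ w, ∑ v, M v w = D := by
    intro w
    cases w with
    | inl i =>
        rw [Fintype.sum_sum_type]
        have h1 : ∑ i' : Fin K, M (Sum.inl i') (Sum.inl i) = D - ∑ j, u i j := by
          simp only [hM]
          rw [Finset.sum_congr rfl (fun i' _ => by
            show (if i' = i then D - ∑ j, u i' j else 0) = if i' = i then D - ∑ j, u i j else 0
            by_cases h : i' = i <;> simp [h])]
          simp [Finset.sum_ite_eq' univ i (fun _ => D - ∑ j, u i j)]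
        have h2 : ∑ j : Fin N, M (Sum.inr j) (Sum.inl i) = ∑ j, u i j := rfl
        rw [h1, h2]; have := hrow i; omega
    | inr j =>
        rw [Fintype.sum_sum_type]
        have h1 : ∑ i : Fin K, M (Sum.inl i) (Sum.inr j) = ∑ i, u i j := rfl
        have h2 : ∑ j' : Fin N, M (Sum.inr j') (Sum.inr j) = D - ∑ i, u i j := by
          simp only [hM]
          rw [Finset.sum_congr rfl (fun j' _ => by
            show (if j' = j then D - ∑ i, u i j' else 0) = if j' = j then D - ∑ i, u i j else 0
            by_cases h : j' = j <;> simp [h])]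
          simp [Finset.sum_ite_eq' univ j (fun _ => D - ∑ i, u i j)]
        rw [h1, h2]; have := hcol j; omega
  obtain ⟨σ, hσ⟩ := birkhoff_nat D M hr hc
  exact ⟨σ, fun i j => hσ (Sum.inl i) (Sum.inr j)⟩


end Aux

section CountLemmas
open Finset
variable {K N D : ℕ} (σ : Fin D → Equiv.Perm (Fin K ⊕ Fin N))
  (u : Fin K → Fin N → ℕ)
  (hσ : ∀ i j, (univ.filter fun t => σ t (Sum.inl i) = Sum.inr j).card = u i j)
include hσ

lemma card_busyOut (j : Fin N) :
    (univ.filter fun t => ∃ i, σ t (Sum.inl i) = Sum.inr j).card = ∑ i, u i j := by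
  classical
  have he : (univ.filter fun t => ∃ i, σ t (Sum.inl i) = Sum.inr j)
      = univ.biUnion fun i => univ.filter fun t => σ t (Sum.inl i) = Sum.inr j := by
    ext t; simp [mem_biUnion]
  rw [he, card_biUnion]
  · exact Finset.sum_congr rfl fun i _ => hσ i j
  · intro a _ b _ hab
    simp only [Finset.disjoint_left, mem_filter, mem_univ, true_and]
    intro t h1 h2
    exact hab (by
      have := h1.trans h2.symm
      exact Sum.inl_injective ((σ t).injective this))

lemma card_busyIn (i : Fin K) :
    (univ.filter fun t => ∃ j', σ t (Sum.inl i) = Sum.inr j').card = ∑ j', u i j' := by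
  classical
  have he : (univ.filter fun t => ∃ j', σ t (Sum.inl i) = Sum.inr j')
      = univ.biUnion fun j' => univ.filter fun t => σ t (Sum.inl i) = Sum.inr j' := by
    ext t; simp [mem_biUnion]
  rw [he, card_biUnion]
  · exact Finset.sum_congr rfl fun j' _ => hσ i j'
  · intro a _ b _ hab
    simp only [Finset.disjoint_left, mem_filter, mem_univ, true_and]
    intro t h1 h2
    exact hab (Sum.inr_injective (h1.symm.trans h2))

/-- eligibility lower bound: `D + u i j ≤ |elig i j| + U j + R i`. -/
lemma elig_bound (i : Fin K) (j : Fin N) :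
    D + u i j ≤ (univ.filter fun t : Fin D =>
        (¬ ∃ i', σ t (Sum.inl i') = Sum.inr j) ∧ (¬ ∃ j', σ t (Sum.inl i) = Sum.inr j')).card
      + (∑ i', u i' j) + (∑ j', u i j') := by
  classical
  set X := univ.filter fun t : Fin D => ∃ i', σ t (Sum.inl i') = Sum.inr j with hX
  set Y := univ.filter fun t : Fin D => ∃ j', σ t (Sum.inl i) = Sum.inr j' with hY
  set A := univ.filter fun t : Fin D => σ t (Sum.inl i) = Sum.inr j with hA
  have hAX : A ⊆ X := by
    intro t ht; simp only [hA, hX, mem_filter] at *; exact ⟨ht.1, ⟨i, ht.2⟩⟩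
  have hAY : A ⊆ Y := by
    intro t ht; simp only [hA, hY, mem_filter] at *; exact ⟨ht.1, ⟨j, ht.2⟩⟩
  have hsub : A ⊆ X ∩ Y := subset_inter hAX hAY
  have h1 : (X ∪ Y).card + A.card ≤ X.card + Y.card := by
    have := Finset.card_union_add_card_inter X Y
    have h2 := Finset.card_le_card hsub
    omega
  have h2 : (univ.filter fun t : Fin D =>
      (¬ ∃ i', σ t (Sum.inl i') = Sum.inr j) ∧ (¬ ∃ j', σ t (Sum.inl i) = Sum.inr j')).card
      + (X ∪ Y).card = D := by
    have : (univ.filter fun t : Fin D =>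
        (¬ ∃ i', σ t (Sum.inl i') = Sum.inr j) ∧ (¬ ∃ j', σ t (Sum.inl i) = Sum.inr j'))
        = univ \ (X ∪ Y) := by
      ext t; simp [hX, hY, mem_union, not_or]
    rw [this]
    have := Finset.card_sdiff_add_card_eq_card (Finset.union_subset (Finset.filter_subset _ _) (Finset.filter_subset _ _) : X ∪ Y ⊆ univ)
    simpa using this
  have hXc : X.card = ∑ i', u i' j := card_busyOut σ u hσ j
  have hYc : Y.card = ∑ j', u i j' := card_busyIn σ u hσ i
  have hAc : A.card = u i j := hσ i j
  omega

end CountLemmas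

open Finset in
/-- Core counting inequality + Hall: assign broadcast units of one output to
eligible unicast slots or overflow (phase-2) slots. -/
lemma exists_broadcast_assignment (K m : ℕ) (hK : 0 < K) (hm : 0 < m)
    (g b R : Fin K → ℕ) (E : Fin K → Finset (Fin (K * m)))
    (hcolC : ∑ i, (g i + b i) ≤ K * m)
    (hrow : ∀ i, R i + b i ≤ K * m)
    (helig : ∀ i, K * m + g i ≤ (E i).card + (∑ i', g i') + R i) :
    ∃ F : (Σ i : Fin K, Fin (b i)) → (Fin (K * m) ⊕ Fin (K * m - m)),
      Function.Injective F ∧ ∀ x, F x ∈ (E x.1).disjSum univ := by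
  classical
  have hm1 : (1:ℤ) ≤ (m:ℤ) := by exact_mod_cast hm
  have hK1 : (1:ℤ) ≤ (K:ℤ) := by exact_mod_cast hK
  have hmD : m ≤ K * m := by
    calc m = 1 * m := (one_mul m).symm
    _ ≤ K * m := Nat.mul_le_mul_right m hK
  -- core inequality
  have core : ∀ B : Finset (Fin K), B.Nonempty →
      ∑ i ∈ B, b i ≤ (B.biUnion E).card + (K * m - m) := by
    intro B hB
    set EB := (B.biUnion E).card with hEB
    have hEsub : ∀ i ∈ B, (E i).card ≤ EB := fun i hi =>
      Finset.card_le_card (fun t ht => mem_biUnion.2 ⟨i, hi, ht⟩)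
    have heligB : ∀ i ∈ B, K * m + g i ≤ EB + (∑ i', g i') + R i := by
      intro i hi; have := helig i; have := hEsub i hi; omega
    have hsub : (∑ i ∈ B, b i) ≤ ∑ i, b i := by
      apply Finset.sum_le_sum_of_subset (subset_univ B)
    -- cast target into ℤ
    rw [← @Nat.cast_le ℤ]
    push_cast [Nat.cast_sub hmD]
    by_cases hA : ∃ i₀ ∈ B, (R i₀ : ℤ) ≤ (K * m : ℤ) - m + g i₀
    · obtain ⟨i₀, hi₀, hRi₀⟩ := hA
      have h1 : (∑ i ∈ B, (b i : ℤ)) ≤ ∑ i, (b i : ℤ) := by exact_mod_cast hsub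
      have h2 : (∑ i, (g i : ℤ)) + ∑ i, (b i : ℤ) ≤ (K * m : ℤ) := by
        have : (∑ i, ((g i : ℤ) + b i)) ≤ (K * m : ℤ) := by exact_mod_cast hcolC
        rw [Finset.sum_add_distrib] at this; linarith
      have h3 : (K * m : ℤ) + g i₀ ≤ EB + (∑ i', (g i' : ℤ)) + R i₀ := by
        exact_mod_cast heligB i₀ hi₀
      linarith
    · push_neg at hA
      have hb1 : ∀ i ∈ B, (b i : ℤ) + g i ≤ (m : ℤ) - 1 := by
        intro i hi
        have h1 := hA i hi
        have h2 : (R i : ℤ) + b i ≤ (K * m : ℤ) := by exact_mod_cast hrow i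
        linarith
      have hKm : ((K : ℤ) - 1) * ((m : ℤ) - 1) ≤ (K * m : ℤ) - m := by
        have e1 : ((K : ℤ) - 1) * ((m : ℤ) - 1) ≤ ((K : ℤ) - 1) * m := by
          apply mul_le_mul_of_nonneg_left (by linarith) (by linarith)
        have e2 : ((K : ℤ) - 1) * m = (K : ℤ) * m - m := by ring
        push_cast
        linarith
      by_cases hBu : B = univ
      · obtain ⟨i₀, hi₀⟩ := hB
        have h3 : (K * m : ℤ) + g i₀ ≤ EB + (∑ i', (g i' : ℤ)) + R i₀ := by
          exact_mod_cast heligB i₀ hi₀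
        have h2 : (R i₀ : ℤ) + b i₀ ≤ (K * m : ℤ) := by exact_mod_cast hrow i₀
        have hsum : ∑ i ∈ B, ((g i : ℤ) + b i)
            = ((g i₀ : ℤ) + b i₀) + ∑ i ∈ B.erase i₀, ((g i : ℤ) + b i) := by
          rw [← Finset.add_sum_erase _ _ hi₀]
        have herase : ∑ i ∈ B.erase i₀, ((g i : ℤ) + b i)
            ≤ ((K : ℤ) - 1) * ((m : ℤ) - 1) := by
          have hcard : (B.erase i₀).card = K - 1 := by
            rw [Finset.card_erase_of_mem hi₀, hBu, Finset.card_univ, Fintype.card_fin]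
          calc ∑ i ∈ B.erase i₀, ((g i : ℤ) + b i)
              ≤ ∑ i ∈ B.erase i₀, ((m : ℤ) - 1) := by
                apply Finset.sum_le_sum
                intro i hi
                have := hb1 i (Finset.mem_of_mem_erase hi)
                linarith
            _ = ((B.erase i₀).card : ℤ) * ((m : ℤ) - 1) := by
                rw [Finset.sum_const, nsmul_eq_mul]
            _ = ((K : ℤ) - 1) * ((m : ℤ) - 1) := by
                rw [hcard]
                congr 1
                have : (1 : ℤ) ≤ K := by exact_mod_cast hK
                push_cast [Nat.cast_sub hK]
                ring
        have hU : (∑ i', (g i' : ℤ)) ≤ ∑ i ∈ B, (g i : ℤ) := by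
          rw [hBu]
        have hgoal : ∑ i ∈ B, (b i : ℤ) = (∑ i ∈ B, ((g i : ℤ) + b i)) - ∑ i ∈ B, (g i : ℤ) := by
          rw [Finset.sum_add_distrib]; ring
        have hgB : ∑ i ∈ B, (g i : ℤ) = ∑ i', (g i' : ℤ) := by rw [hBu]
        have hg0B : (g i₀ : ℤ) + ∑ i ∈ B.erase i₀, (g i : ℤ) = ∑ i ∈ B, (g i : ℤ) := by
          rw [← Finset.add_sum_erase _ _ hi₀]
        have hbB : (b i₀ : ℤ) + ∑ i ∈ B.erase i₀, (b i : ℤ) = ∑ i ∈ B, (b i : ℤ) := by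
          rw [← Finset.add_sum_erase _ _ hi₀]
        have hge : ∑ i ∈ B.erase i₀, (b i : ℤ) ≤ ∑ i ∈ B.erase i₀, ((g i : ℤ) + b i) := by
          apply Finset.sum_le_sum; intro i _; 
          have : (0:ℤ) ≤ g i := by positivity
          linarith
        -- E ≥ b₀ + g₀ - U ; ∑ b ≤ b₀ + (K-1)(m-1) - ... 
        linarith
      · -- B ⊊ univ
        have hcard : B.card ≤ K - 1 := by
          have h1 : B.card < K := by
            have := Finset.card_lt_card (Finset.ssubset_univ_iff.2 hBu)
            simpa using this
          omega
        have h0 : (0 : ℤ) ≤ EB := by positivity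
        calc ∑ i ∈ B, (b i : ℤ) ≤ ∑ i ∈ B, ((m : ℤ) - 1) := by
              apply Finset.sum_le_sum
              intro i hi
              have := hb1 i hi
              have : (0:ℤ) ≤ g i := by positivity
              linarith [hb1 i hi]
          _ = (B.card : ℤ) * ((m:ℤ) - 1) := by rw [Finset.sum_const, nsmul_eq_mul]
          _ ≤ ((K : ℤ) - 1) * ((m:ℤ) - 1) := by
              apply mul_le_mul_of_nonneg_right _ (by linarith)
              have := hcard
              have hcK : (B.card : ℤ) ≤ (K:ℤ) - 1 := by omega
              exact hcK
          _ ≤ (K * m : ℤ) - m := hKm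
          _ ≤ EB + ((K * m : ℤ) - m) := by linarith
    -- end core
  -- Hall condition
  have hall : ∀ A : Finset (Σ i : Fin K, Fin (b i)),
      A.card ≤ (A.biUnion fun x => (E x.1).disjSum (univ : Finset (Fin (K * m - m)))).card := by
    intro A
    rcases A.eq_empty_or_nonempty with h | h
    · simp [h]
    · set B := A.image Sigma.fst with hB
      have hBne : B.Nonempty := h.image _
      have hbi : A.biUnion (fun x => (E x.1).disjSum (univ : Finset (Fin (K * m - m))))
          = (B.biUnion E).disjSum univ := by
        ext gx
        cases gx with
        | inl t =>
            simp only [mem_biUnion, Finset.inl_mem_disjSum, hB, mem_image]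
            constructor
            · rintro ⟨x, hx, ht⟩; exact ⟨x.1, ⟨x, hx, rfl⟩, ht⟩
            · rintro ⟨i, ⟨x, hx, rfl⟩, ht⟩; exact ⟨x, hx, ht⟩
        | inr s =>
            simp only [mem_biUnion, Finset.inr_mem_disjSum]
            simp only [mem_univ, iff_true]
            obtain ⟨x, hx⟩ := h
            exact ⟨x, hx, by simp⟩
      have hAcard : A.card ≤ ∑ i ∈ B, b i := by
        have hsub : A ⊆ B.sigma (fun i => (univ : Finset (Fin (b i)))) := by
          intro x hx
          rw [Finset.mem_sigma]
          exact ⟨mem_image_of_mem _ hx, mem_univ _⟩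
        have := Finset.card_le_card hsub
        rwa [Finset.card_sigma, Finset.sum_congr rfl (fun i _ => by
          rw [Finset.card_univ, Fintype.card_fin])] at this
      rw [hbi, Finset.card_disjSum, Finset.card_univ, Fintype.card_fin]
      exact le_trans hAcard (core B hBne)
  obtain ⟨F, hFinj, hFmem⟩ := (Finset.all_card_le_biUnion_card_iff_exists_injective _).1 hall
  exact ⟨F, hFinj, hFmem⟩

open Finset in
theorem main_schedule (K N m : ℕ) (hK : 0 < K) (hN : 0 < N) (hm : 0 < m)
    (u b : Fin K → Fin N → ℕ)
    (hrow : ∀ i j, (∑ j', u i j') + b i j ≤ K * m)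
    (hcol : ∀ j, (∑ i, (u i j + b i j)) ≤ K * m) :
    ∃ S : (Fin (K * m) ⊕ Fin (K * m - m)) → Finset (CGVert K N),
      (∀ g, ∀ v ∈ S g, ∀ w ∈ S g, ¬ (ECG K N).Adj v w) ∧
      (∀ i j, (univ.filter fun g => ((false : Bool), i, j) ∈ S g).card = u i j) ∧
      (∀ i j, (univ.filter fun g => ((true : Bool), i, j) ∈ S g).card = b i j) := by
  classical
  have hrowu : ∀ i, ∑ j, u i j ≤ K * m := fun i =>
    le_trans (Nat.le_add_right _ _) (hrow i ⟨0, hN⟩)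
  have hcolu : ∀ j, ∑ i, u i j ≤ K * m := fun j =>
    le_trans (Finset.sum_le_sum fun i _ => Nat.le_add_right _ _) (hcol j)
  obtain ⟨σ, hσ⟩ := exists_unicast_schedule K N (K * m) u hrowu hcolu
  set elig : Fin K → Fin N → Finset (Fin (K * m)) := fun i j =>
    univ.filter fun t => (¬ ∃ i', σ t (Sum.inl i') = Sum.inr j) ∧
      (¬ ∃ j', σ t (Sum.inl i) = Sum.inr j') with helig_def
  have hass : ∀ j : Fin N,
      ∃ F : (Σ i : Fin K, Fin (b i j)) → (Fin (K * m) ⊕ Fin (K * m - m)),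
        Function.Injective F ∧ ∀ x, F x ∈ (elig x.1 j).disjSum univ := by
    intro j
    exact exists_broadcast_assignment K m hK hm (fun i => u i j) (fun i => b i j)
      (fun i => ∑ j', u i j') (fun i => elig i j)
      (hcol j) (fun i => hrow i j) (fun i => elig_bound σ u hσ i j)
  choose F hFinj hFmem using hass
  set S : (Fin (K * m) ⊕ Fin (K * m - m)) → Finset (CGVert K N) := fun g =>
    univ.filter fun v =>
      (v.1 = true ∧ ∃ c : Fin (b v.2.1 v.2.2), F v.2.2 ⟨v.2.1, c⟩ = g) ∨
      (v.1 = false ∧ ∃ t : Fin (K * m), g = Sum.inl t ∧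
        σ t (Sum.inl v.2.1) = Sum.inr v.2.2) with hS
  refine ⟨S, ?_, ?_, ?_⟩
  · -- independence
    rintro g ⟨bv, iv, jv⟩ hv ⟨bw, iw, jw⟩ hw hadj
    obtain ⟨hne, hor⟩ : _ ∧ _ := hadj
    have Pv := (Finset.mem_filter.1 hv).2
    have Pw := (Finset.mem_filter.1 hw).2
    rcases Pv with ⟨hbv, c, hFc⟩ | ⟨hbv, t, hgt, hst⟩
    · rcases Pw with ⟨hbw, c', hFc'⟩ | ⟨hbw, t', hgt', hst'⟩
      · -- both broadcasts
        subst hbv; subst hbw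
        rcases hor with ⟨hin, hfalse⟩ | ⟨hout, hin⟩
        · rcases hfalse with h | h <;> simp at h
        · -- same output, different input
          subst hout
          have : (⟨iv, c⟩ : Σ i : Fin K, Fin (b i jv)) = ⟨iw, c'⟩ :=
            hFinj jv (hFc.trans hFc'.symm)
          exact hin (congrArg Sigma.fst this)
      · -- v broadcast, w unicast
        subst hbv; subst hbw
        have hmem := hFmem jv ⟨iv, c⟩
        rw [hFc, hgt'] at hmem
        rw [Finset.inl_mem_disjSum] at hmem
        have hcond := (Finset.mem_filter.1 hmem).2
        rcases hor with ⟨hin, _⟩ | ⟨hout, hin⟩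
        · exact hcond.2 ⟨jw, by show (σ t') (Sum.inl iv) = Sum.inr jw; rw [show iv = iw from hin]; exact hst'⟩
        · exact hcond.1 ⟨iw, by show (σ t') (Sum.inl iw) = Sum.inr jv; rw [show jv = jw from hout]; exact hst'⟩
    · rcases Pw with ⟨hbw, c', hFc'⟩ | ⟨hbw, t', hgt', hst'⟩
      · -- v unicast, w broadcast
        subst hbv; subst hbw
        have hmem := hFmem jw ⟨iw, c'⟩
        rw [hFc', hgt] at hmem
        rw [Finset.inl_mem_disjSum] at hmem
        have hcond := (Finset.mem_filter.1 hmem).2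
        rcases hor with ⟨hin, _⟩ | ⟨hout, hin⟩
        · exact hcond.2 ⟨jv, by show (σ t) (Sum.inl iw) = Sum.inr jv; rw [← show iv = iw from hin]; exact hst⟩
        · exact hcond.1 ⟨iv, by show (σ t) (Sum.inl iv) = Sum.inr jw; rw [← show jv = jw from hout]; exact hst⟩
      · -- both unicasts
        subst hbv; subst hbw
        have htt : t = t' := Sum.inl_injective (hgt.symm.trans hgt')
        subst htt
        rcases hor with ⟨hin, _⟩ | ⟨hout, hin⟩
        · have hin' : iv = iw := hin
          have hj : jv = jw := by
            have h1 : (Sum.inr jv : Fin K ⊕ Fin N) = Sum.inr jw := by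
              rw [← hst, ← hst', hin']
            exact Sum.inr_injective h1
          exact hne (by rw [hin', hj])
        · have hout' : jv = jw := hout
          have h1 : (Sum.inl iv : Fin K ⊕ Fin N) = Sum.inl iw := by
            apply (σ t).injective
            rw [hst, hst', hout']
          exact hin (Sum.inl_injective h1)
  · -- unicast counts
    intro i j
    have hfe : (univ.filter fun g => ((false : Bool), i, j) ∈ S g)
        = univ.filter (fun g => ∃ t : Fin (K * m), g = Sum.inl t ∧
            σ t (Sum.inl i) = Sum.inr j) := by
      apply Finset.filter_congr
      intro g _
      simp [hS]
    rw [hfe]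
    have hhelp : (univ.filter (fun g : Fin (K * m) ⊕ Fin (K * m - m) =>
        ∃ t : Fin (K * m), g = Sum.inl t ∧ σ t (Sum.inl i) = Sum.inr j)).card
        = (univ.filter fun t : Fin (K * m) => σ t (Sum.inl i) = Sum.inr j).card := by
      symm
      apply Finset.card_bij (fun t _ => Sum.inl t)
      · intro t ht
        simp only [Finset.mem_filter, Finset.mem_univ, true_and] at ht ⊢
        exact ⟨t, rfl, ht⟩
      · intro t1 _ t2 _ h
        exact Sum.inl_injective h
      · intro g hg
        simp only [Finset.mem_filter, Finset.mem_univ, true_and] at hg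
        obtain ⟨t, rfl, hst⟩ := hg
        exact ⟨t, by simp [hst], rfl⟩
    rw [hhelp, hσ]
  · -- broadcast counts
    intro i j
    have hinj : Function.Injective (fun c : Fin (b i j) => F j ⟨i, c⟩) := by
      intro c c' h
      have h2 := hFinj j h
      have h3 := (Sigma.mk.inj_iff.1 h2).2
      exact eq_of_heq h3
    have hfe : (univ.filter fun g => ((true : Bool), i, j) ∈ S g)
        = univ.image (fun c : Fin (b i j) => F j ⟨i, c⟩) := by
      ext g
      simp only [Finset.mem_filter, Finset.mem_univ, true_and, Finset.mem_image, hS]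
      simp
    rw [hfe, Finset.card_image_of_injective _ hinj, Finset.card_univ, Fintype.card_fin]

section Final
open Finset

lemma scaled_point_mem (K N m : ℕ) (hK : 0 < K) (hN : 0 < N) (hm : 0 < m)
    (u b : Fin K → Fin N → ℕ)
    (hrow : ∀ i j, (∑ j', u i j') + b i j ≤ K * m)
    (hcol : ∀ j, (∑ i, (u i j + b i j)) ≤ K * m) :
    (fun v : CGVert K N =>
      (if v.1 = true then (b v.2.1 v.2.2 : ℝ) else (u v.2.1 v.2.2 : ℝ)) / ((K : ℝ) * m))
      ∈ ((2 * K - 1 : ℝ) / K) • STAB (ECG K N) := by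
  classical
  obtain ⟨S, hind, hcu, hcb⟩ := main_schedule K N m hK hN hm u b hrow hcol
  have hKR : (1 : ℝ) ≤ (K : ℝ) := by exact_mod_cast hK
  have hmR : (1 : ℝ) ≤ (m : ℝ) := by exact_mod_cast hm
  have hden : (0 : ℝ) < (2 * K - 1) * m := by nlinarith
  have hmD : m ≤ K * m := by
    calc m = 1 * m := (one_mul m).symm
    _ ≤ K * m := Nat.mul_le_mul_right m hK
  set w : (Fin (K * m) ⊕ Fin (K * m - m)) → ℝ := fun _ => 1 / ((2 * K - 1) * m) with hw
  have hcardG : ((Fintype.card (Fin (K * m) ⊕ Fin (K * m - m)) : ℕ) : ℝ) = (2 * K - 1) * m := by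
    have h1 : Fintype.card (Fin (K * m) ⊕ Fin (K * m - m)) = K * m + (K * m - m) := by
      simp [Fintype.card_sum]
    rw [h1]
    push_cast [Nat.cast_sub hmD]
    ring
  have hwsum : ∑ g : (Fin (K * m) ⊕ Fin (K * m - m)), w g = 1 := by
    rw [Finset.sum_const, Finset.card_univ, nsmul_eq_mul, hcardG]
    field_simp
    exact div_self (ne_of_gt (by linarith))
  set z : (Fin (K * m) ⊕ Fin (K * m - m)) → (CGVert K N → ℝ) :=
    fun g => Set.indicator (↑(S g)) (fun _ => (1 : ℝ)) with hz
  set y : CGVert K N → ℝ := fun v =>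
    (if v.1 = true then (b v.2.1 v.2.2 : ℝ) else (u v.2.1 v.2.2 : ℝ)) / ((2 * K - 1) * m)
    with hy
  have hymem : y ∈ STAB (ECG K N) := by
    rw [STAB]
    have hmem := Finset.centerMass_mem_convexHull (t := (univ : Finset (Fin (K * m) ⊕ Fin (K * m - m)))) (w := w)
      (z := z)
      (s := {x | ∃ T : Set (CGVert K N), (∀ v ∈ T, ∀ w ∈ T, ¬ (ECG K N).Adj v w) ∧
        x = T.indicator (fun _ => (1 : ℝ))})
      (fun g _ => by positivity)
      (by rw [hwsum]; norm_num)
      (fun g _ => ⟨(↑(S g) : Set (CGVert K N)),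
        fun v hv w' hw' => hind g v (Finset.mem_coe.1 hv) w' (Finset.mem_coe.1 hw'), rfl⟩)
    have hcm : (univ : Finset (Fin (K * m) ⊕ Fin (K * m - m))).centerMass w z = y := by
      rw [Finset.centerMass_eq_of_sum_1 _ _ hwsum]
      funext v
      rw [Finset.sum_apply]
      have hterm : ∀ g : (Fin (K * m) ⊕ Fin (K * m - m)),
          (w g • z g) v = if v ∈ S g then 1 / ((2 * (K:ℝ) - 1) * m) else 0 := by
        intro g
        simp only [Pi.smul_apply, hz, smul_eq_mul]
        rw [Set.indicator_apply]
        simp only [Finset.mem_coe]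
        by_cases h : v ∈ S g
        · simp [h, hw]
        · simp [h, hw]
      rw [Finset.sum_congr rfl (fun g _ => hterm g)]
      rw [← Finset.sum_filter]
      rw [Finset.sum_const, nsmul_eq_mul]
      obtain ⟨bv, iv, jv⟩ := v
      cases bv
      · rw [hcu iv jv]
        simp [hy, div_eq_mul_inv, mul_inv]
      · rw [hcb iv jv]
        simp [hy, div_eq_mul_inv, mul_inv]
    rw [← hcm]
    exact hmem
  refine ⟨y, hymem, ?_⟩
  funext v
  simp only [Pi.smul_apply, smul_eq_mul, hy]
  have hK0 : (K : ℝ) ≠ 0 := by linarith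
  have h2K : (2 * (K : ℝ) - 1) ≠ 0 := by nlinarith
  have hm0 : (m : ℝ) ≠ 0 := by linarith
  field_simp

theorem stmt0 (K N : ℕ) (hK : 0 < K) (hN : 0 < N) :
    QSTAB (ECG K N) ⊆ ((2 * K - 1 : ℝ) / K) • STAB (ECG K N) := by
  classical
  intro x hx
  obtain ⟨hx0, hxQ⟩ := hx
  have hrowQ : ∀ (i : Fin K) (j : Fin N),
      x (true, i, j) + ∑ j', x (false, i, j') ≤ 1 := by
    intro i j
    have hclique : (ECG K N).IsClique
        (↑(insert ((true : Bool), i, j)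
          (univ.image fun j' : Fin N => ((false : Bool), i, j'))) : Set (CGVert K N)) := by
      intro v hv w hw hvw
      change _ ∧ _
      simp only [Finset.coe_insert, Set.mem_insert_iff, Finset.coe_image,
        Set.mem_image, Finset.mem_coe, Finset.mem_univ] at hv hw
      rcases hv with rfl | ⟨j1, _, rfl⟩ <;> rcases hw with rfl | ⟨j2, _, rfl⟩
      · exact absurd rfl hvw
      · exact ⟨hvw, Or.inl ⟨rfl, Or.inr rfl⟩⟩
      · exact ⟨hvw, Or.inl ⟨rfl, Or.inl rfl⟩⟩
      · exact ⟨hvw, Or.inl ⟨rfl, Or.inl rfl⟩⟩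
    have hsum := hxQ _ hclique
    rw [Finset.sum_insert (by simp)] at hsum
    rw [Finset.sum_image (fun a _ c _ h => by simpa using h)] at hsum
    exact hsum
  have hcolQ : ∀ j : Fin N,
      (∑ i, (x (false, i, j) + x (true, i, j))) ≤ 1 := by
    intro j
    have hclique : (ECG K N).IsClique
        (↑(univ.image fun p : Bool × Fin K => (p.1, p.2, j)) : Set (CGVert K N)) := by
      intro v hv w hw hvw
      simp only [Finset.coe_image, Set.mem_image, Finset.mem_coe, Finset.mem_univ] at hv hw
      obtain ⟨p, _, rfl⟩ := hv
      obtain ⟨q, _, rfl⟩ := hw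
      change _ ∧ _
      refine ⟨hvw, ?_⟩
      by_cases hin : p.2 = q.2
      · left
        refine ⟨hin, ?_⟩
        have hbne : p.1 ≠ q.1 := by
          intro hb
          exact hvw (by rw [hb, hin])
        cases hb : p.1 <;> cases hb' : q.1
        · exact Or.inl rfl
        · exact Or.inl rfl
        · exact Or.inr rfl
        · exact absurd (hb.trans hb'.symm) hbne
      · right
        exact ⟨rfl, hin⟩
    have hsum := hxQ _ hclique
    rw [Finset.sum_image (fun a _ c _ h => by
      simpa [Prod.ext_iff] using h)] at hsum
    rw [Fintype.sum_prod_type, Fintype.sum_bool] at hsum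
    have hsum' : (∑ i, x (true, i, j)) + ∑ i, x (false, i, j) ≤ 1 := by
      simpa using hsum
    rw [Finset.sum_add_distrib]
    linarith
  -- the approximating sequence
  set q : ℕ → (CGVert K N → ℝ) := fun n v =>
    (⌊x v * ((K : ℝ) * ((n + 1 : ℕ) : ℝ))⌋₊ : ℝ) / ((K : ℝ) * ((n + 1 : ℕ) : ℝ)) with hq
  have hDpos : ∀ n : ℕ, (0 : ℝ) < (K : ℝ) * ((n + 1 : ℕ) : ℝ) := by
    intro n
    have : (1:ℝ) ≤ (K:ℝ) := by exact_mod_cast hK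
    have : (0:ℝ) < ((n+1 : ℕ):ℝ) := by positivity
    positivity
  have hmemn : ∀ n : ℕ, q n ∈ ((2 * K - 1 : ℝ) / K) • STAB (ECG K N) := by
    intro n
    set uf : Fin K → Fin N → ℕ := fun i j =>
      ⌊x (false, i, j) * ((K : ℝ) * ((n + 1 : ℕ) : ℝ))⌋₊ with huf
    set bf : Fin K → Fin N → ℕ := fun i j =>
      ⌊x (true, i, j) * ((K : ℝ) * ((n + 1 : ℕ) : ℝ))⌋₊ with hbf
    have hDn := hDpos n
    have hfloor_le : ∀ v : CGVert K N,
        ((⌊x v * ((K : ℝ) * ((n + 1 : ℕ) : ℝ))⌋₊ : ℕ) : ℝ)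
          ≤ x v * ((K : ℝ) * ((n + 1 : ℕ) : ℝ)) := by
      intro v
      exact Nat.floor_le (mul_nonneg (hx0 v) (le_of_lt hDn))
    have hcast : ((K * (n+1) : ℕ) : ℝ) = (K : ℝ) * ((n + 1 : ℕ) : ℝ) := by push_cast; ring
    have hrowf : ∀ i j, (∑ j', uf i j') + bf i j ≤ K * (n + 1) := by
      intro i j
      rw [← @Nat.cast_le ℝ]
      push_cast
      calc (∑ j', ((uf i j' : ℕ) : ℝ)) + ((bf i j : ℕ) : ℝ)
          ≤ (∑ j', x (false, i, j') * ((K : ℝ) * ((n + 1 : ℕ) : ℝ)))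
            + x (true, i, j) * ((K : ℝ) * ((n + 1 : ℕ) : ℝ)) := by
            apply add_le_add
            · exact Finset.sum_le_sum fun j' _ => hfloor_le (false, i, j')
            · exact hfloor_le (true, i, j)
        _ = (x (true, i, j) + ∑ j', x (false, i, j')) * ((K : ℝ) * ((n + 1 : ℕ) : ℝ)) := by
            rw [← Finset.sum_mul]; ring
        _ ≤ 1 * ((K : ℝ) * ((n + 1 : ℕ) : ℝ)) := by
            apply mul_le_mul_of_nonneg_right (hrowQ i j) (le_of_lt hDn)
        _ = (K : ℝ) * ((n + 1 : ℕ) : ℝ) := by ring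
        _ = (K : ℝ) * ((n : ℝ) + 1) := by push_cast; ring
    have hcolf : ∀ j, (∑ i, (uf i j + bf i j)) ≤ K * (n + 1) := by
      intro j
      rw [← @Nat.cast_le ℝ]
      push_cast
      calc (∑ i, (((uf i j : ℕ) : ℝ) + ((bf i j : ℕ) : ℝ)))
          ≤ ∑ i, (x (false, i, j) + x (true, i, j)) * ((K : ℝ) * ((n + 1 : ℕ) : ℝ)) := by
            apply Finset.sum_le_sum
            intro i _
            have h1 := hfloor_le (false, i, j)
            have h2 := hfloor_le (true, i, j)
            rw [add_mul]
            exact add_le_add h1 h2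
        _ = (∑ i, (x (false, i, j) + x (true, i, j))) * ((K : ℝ) * ((n + 1 : ℕ) : ℝ)) := by
            rw [← Finset.sum_mul]
        _ ≤ 1 * ((K : ℝ) * ((n + 1 : ℕ) : ℝ)) := by
            apply mul_le_mul_of_nonneg_right (hcolQ j) (le_of_lt hDn)
        _ = (K : ℝ) * ((n + 1 : ℕ) : ℝ) := by ring
        _ = (K : ℝ) * ((n : ℝ) + 1) := by push_cast; ring
    have hmem := scaled_point_mem K N (n + 1) hK hN (Nat.succ_pos n) uf bf hrowf hcolf
    have heq : (fun v : CGVert K N =>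
        (if v.1 = true then (bf v.2.1 v.2.2 : ℝ) else (uf v.2.1 v.2.2 : ℝ))
          / ((K : ℝ) * ((n + 1 : ℕ) : ℝ))) = q n := by
      funext v
      obtain ⟨bv, iv, jv⟩ := v
      cases bv <;> rfl
    rwa [heq] at hmem
  -- limit
  have htend : Filter.Tendsto q Filter.atTop (nhds x) := by
    rw [tendsto_pi_nhds]
    intro v
    have hup : ∀ n : ℕ, q n v ≤ x v := by
      intro n
      rw [hq]
      rw [div_le_iff₀ (hDpos n)]
      exact Nat.floor_le (mul_nonneg (hx0 v) (le_of_lt (hDpos n)))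
    have hlow : ∀ n : ℕ, x v - 1 / ((K : ℝ) * ((n + 1 : ℕ) : ℝ)) ≤ q n v := by
      intro n
      rw [hq]
      rw [sub_le_iff_le_add, ← add_div, le_div_iff₀ (hDpos n)]
      have := Nat.lt_floor_add_one (x v * ((K : ℝ) * ((n + 1 : ℕ) : ℝ)))
      linarith
    have hzero : Filter.Tendsto (fun n : ℕ => 1 / ((K : ℝ) * ((n + 1 : ℕ) : ℝ)))
        Filter.atTop (nhds 0) := by
      have h1 : Filter.Tendsto (fun n : ℕ => ((K : ℝ) * ((n + 1 : ℕ) : ℝ)))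
          Filter.atTop Filter.atTop := by
        apply Filter.Tendsto.const_mul_atTop (by exact_mod_cast hK)
        have : Filter.Tendsto (fun n : ℕ => ((n : ℝ) + 1)) Filter.atTop Filter.atTop :=
          Filter.tendsto_atTop_add_const_right _ _ tendsto_natCast_atTop_atTop
        apply this.congr
        intro n
        push_cast
        ring
      exact h1.inv_tendsto_atTop.congr (fun n => (one_div _).symm)
    have hlowtend : Filter.Tendsto
        (fun n : ℕ => x v - 1 / ((K : ℝ) * ((n + 1 : ℕ) : ℝ))) Filter.atTop (nhds (x v)) := by
      have := Filter.Tendsto.const_sub (x v) hzero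
      simpa using this
    exact tendsto_of_tendsto_of_tendsto_of_le_of_le hlowtend tendsto_const_nhds hlow hup
  -- closedness
  have hfin : Set.Finite {y : CGVert K N → ℝ | ∃ S : Set (CGVert K N),
      (∀ v ∈ S, ∀ w ∈ S, ¬ (ECG K N).Adj v w) ∧
      y = S.indicator (fun _ => (1 : ℝ))} := by
    apply Set.Finite.subset (Set.finite_range
      (fun S : Set (CGVert K N) => S.indicator (fun _ => (1 : ℝ))))
    rintro y ⟨T, _, rfl⟩
    exact ⟨T, rfl⟩
  have hcomp : IsCompact (STAB (ECG K N)) := hfin.isCompact_convexHull (𝕜 := ℝ)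
  have hclosed : IsClosed (((2 * K - 1 : ℝ) / K) • STAB (ECG K N)) := by
    rw [← Set.image_smul]
    exact (hcomp.image (continuous_const_smul _)).isClosed
  exact hclosed.mem_of_tendsto htend (Filter.Eventually.of_forall hmemn)

end Final
end

section
/- For all positive integers K and N and every i ∈ {1,…,K}, the subgraph of the enhanced conflict graph G_{K,N} induced by the vertex set consisting of all broadcast vertices b_{jk} (j ∈ {1,…,K}, k ∈ {1,…,N}) together with the unicast vertices u_{ij} (j ∈ {1,…,N}) from input i is a perfect graph. -/
open SimpleGraph Pointwise

universe u

/-- A simplicial-ordering condition transfers to induced subgraphs. -/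
lemma seo_induce {V : Type u} {G : SimpleGraph V} {f : V → ℕ}
    (h : ∀ v, G.IsClique (insert v {w | G.Adj v w ∧ f v < f w})) (S : Set V) :
    ∀ v : S, (G.induce S).IsClique
      (insert v {w | (G.induce S).Adj v w ∧ f v.1 < f w.1}) := by
  intro v a ha b hb hab
  have key : ∀ x : S, x ∈ insert v {w | (G.induce S).Adj v w ∧ f v.1 < f w.1} →
      (x : V) ∈ insert (v : V) {w | G.Adj v.1 w ∧ f v.1 < f w} := by
    rintro x (rfl | ⟨hadj, hf⟩)
    · exact Set.mem_insert _ _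
    · exact Set.mem_insert_of_mem _ ⟨hadj, hf⟩
  have : G.Adj a.1 b.1 :=
    h v.1 (key a ha) (key b hb) (fun he => hab (Subtype.ext he))
  exact this

/-- Cliques of an induced subgraph give cliques of the same size in the graph. -/
lemma clique_of_induce {V : Type u} [DecidableEq V] {G : SimpleGraph V} {S : Set V}
    {s : Finset S} (hs : (G.induce S).IsClique s) :
    G.IsClique ((s.image (Subtype.val)) : Set V) ∧
      (s.image (Subtype.val)).card = s.card := by
  constructor
  · intro a ha b hb hab
    rw [Finset.mem_coe, Finset.mem_image] at ha hb
    obtain ⟨a', ha', rfl⟩ := ha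
    obtain ⟨b', hb', rfl⟩ := hb
    exact hs ha' hb' (fun he => hab (congrArg Subtype.val he))
  · exact Finset.card_image_of_injective _ Subtype.coe_injective

/-- Greedy colouring along a simplicial elimination ordering. -/
lemma greedy_colorable : ∀ (m : ℕ) (V : Type u) (G : SimpleGraph V) [Fintype V],
    Fintype.card V ≤ m →
    ∀ f : V → ℕ, Function.Injective f →
    (∀ v : V, G.IsClique (insert v {w | G.Adj v w ∧ f v < f w})) →
    ∀ n : ℕ, (∀ s : Finset V, G.IsClique (s : Set V) → s.card ≤ n) →
    G.Colorable n := by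
  intro m
  induction m with
  | zero =>
    intro V G _ hcard f hf hseo n hn
    have : IsEmpty V := by
      rw [← Fintype.card_eq_zero_iff]; omega
    exact SimpleGraph.Colorable.of_isEmpty (G := G) n
  | succ m ih =>
    intro V G _ hcard f hf hseo n hn
    classical
    by_cases hV : IsEmpty V
    · exact SimpleGraph.Colorable.of_isEmpty (G := G) n
    have hne : Nonempty V := not_isEmpty_iff.mp hV
    obtain ⟨v, -, hv⟩ := Finset.exists_min_image Finset.univ f
      ⟨Classical.arbitrary V, Finset.mem_univ _⟩
    have hv' : ∀ w : V, f v ≤ f w := fun w => hv w (Finset.mem_univ _)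
    set S : Set V := {w | w ≠ v} with hS
    have hcardS : Fintype.card S < Fintype.card V := by
      have : ¬ (v ∈ S) := by simp [hS]
      exact Fintype.card_subtype_lt (x := v) (by simp [hS])
    -- the induced graph
    have hseo' := seo_induce hseo S
    have hn' : ∀ s : Finset S, (G.induce S).IsClique (s : Set S) → s.card ≤ n := by
      intro s hs
      obtain ⟨hc, hcard'⟩ := clique_of_induce hs
      rw [← hcard']
      exact hn _ hc
    have hcol : (G.induce S).Colorable n :=
      ih S (G.induce S) (by omega) (fun w => f w.1)
        (fun a b hab => Subtype.ext (hf hab)) hseo' n hn'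
    obtain ⟨C⟩ := hcol
    -- v's neighbours form a clique with v
    have hnbr : {w | G.Adj v w ∧ f v < f w} = {w | G.Adj v w} := by
      ext w
      simp only [Set.mem_setOf_eq, and_iff_left_iff_imp]
      intro hadj
      exact lt_of_le_of_ne (hv' w) (fun he => G.ne_of_adj hadj (hf he))
    have hclique : G.IsClique (insert v {w | G.Adj v w}) := by
      rw [← hnbr]; exact hseo v
    have hn1 : 1 ≤ n := by
      have := hn {v} (by simp [SimpleGraph.isClique_iff, Set.Pairwise])
      simpa using this
    -- used colours
    have hfin : Fintype {w // G.Adj v w} := by infer_instance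
    set used : Finset (Fin n) :=
      Finset.image (fun w : {w // G.Adj v w} =>
        C ⟨w.1, G.ne_of_adj w.2 ∘ Eq.symm⟩) Finset.univ with hused
    have hused_card : used.card < n := by
      have h1 : used.card ≤ Fintype.card {w // G.Adj v w} :=
        le_trans (Finset.card_image_le) (by simp)
      have h2 : Fintype.card {w // G.Adj v w} + 1 ≤ n := by
        have hins : G.IsClique ((insert v (Set.toFinset {w | G.Adj v w} : Finset V) : Finset V) : Set V) := by
          convert hclique using 1
          simp
        have := hn _ hins
        rw [Finset.card_insert_of_notMem (by simp), Set.toFinset_card] at this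
        convert this <;> simp
      omega
    have : (usedᶜ : Finset (Fin n)).Nonempty := by
      rw [← Finset.card_pos, Finset.card_compl]
      simp only [Fintype.card_fin]
      omega
    obtain ⟨c, hc⟩ := this
    rw [Finset.mem_compl] at hc
    -- build the colouring
    refine ⟨SimpleGraph.Coloring.mk
      (fun w => if h : w = v then c else C ⟨w, h⟩) ?_⟩
    intro a b hadj
    by_cases ha : a = v <;> by_cases hb : b = v
    · rw [ha, hb] at hadj
      exact (G.irrefl hadj).elim
    · subst ha
      simp only [dif_pos rfl, dif_neg hb]
      intro he
      apply hc
      rw [hused, Finset.mem_image]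
      exact ⟨⟨b, hadj⟩, Finset.mem_univ _, he.symm⟩
    · subst hb
      simp only [dif_pos rfl, dif_neg ha]
      intro he
      apply hc
      rw [hused, Finset.mem_image]
      exact ⟨⟨a, hadj.symm⟩, Finset.mem_univ _, he⟩
    · simp only [dif_neg ha, dif_neg hb]
      exact C.valid (show (G.induce S).Adj ⟨a, ha⟩ ⟨b, hb⟩ from hadj)

/-- Greedy elimination ordering value for the vertices. -/
def fv (K N : ℕ) (i : Fin K) : CGVert K N → ℕ
  | (true, j, k) => if j = i then K * N + k.1 else j.1 * N + k.1
  | (false, j, k) => K * N + N + (j.1 * N + k.1)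

lemma fv_bound {K N : ℕ} (j : Fin K) (k : Fin N) : j.1 * N + k.1 < K * N :=
  calc j.1 * N + k.1 < j.1 * N + N := Nat.add_lt_add_left k.2 _
    _ = (j.1 + 1) * N := (Nat.succ_mul _ _).symm
    _ ≤ K * N := Nat.mul_le_mul_right _ j.2

lemma dec_eq {N j j' k k' : ℕ} (hk : k < N) (hk' : k' < N)
    (h : j * N + k = j' * N + k') : j = j' ∧ k = k' := by
  have hj : j = j' := by
    by_contra hne
    rcases Nat.lt_or_ge j j' with hlt | hge
    · have h1 : j * N + k < j' * N + k' :=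
        calc j * N + k < j * N + N := Nat.add_lt_add_left hk _
          _ = (j + 1) * N := (Nat.succ_mul _ _).symm
          _ ≤ j' * N := Nat.mul_le_mul_right _ hlt
          _ ≤ j' * N + k' := Nat.le_add_right _ _
      omega
    · have hlt : j' < j := by omega
      have h1 : j' * N + k' < j * N + k :=
        calc j' * N + k' < j' * N + N := Nat.add_lt_add_left hk' _
          _ = (j' + 1) * N := (Nat.succ_mul _ _).symm
          _ ≤ j * N := Nat.mul_le_mul_right _ hlt
          _ ≤ j * N + k := Nat.le_add_right _ _
      omega
  subst hj
  exact ⟨rfl, by omega⟩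

lemma fv_inj {K N : ℕ} (i : Fin K) : Function.Injective (fv K N i) := by
  rintro ⟨b1, j1, k1⟩ ⟨b2, j2, k2⟩ h
  have hb1 := fv_bound (N := N) j1 k1
  have hb2 := fv_bound (N := N) j2 k2
  have hk1 := k1.2
  have hk2 := k2.2
  cases b1 <;> cases b2 <;> simp only [fv] at h
  · -- false, false
    have h' : j1.1 * N + k1.1 = j2.1 * N + k2.1 := by omega
    obtain ⟨hj, hk⟩ := dec_eq hk1 hk2 h'
    simp [Prod.ext_iff, Fin.ext_iff, hj, hk]
  · -- false, true
    split_ifs at h <;> omega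
  · -- true, false
    split_ifs at h <;> omega
  · -- true, true
    split_ifs at h with h1 h2 h3
    · have : k1 = k2 := Fin.ext (by omega)
      subst h1; subst h2; simp [this]
    · omega
    · omega
    · obtain ⟨hj, hk⟩ := dec_eq hk1 hk2 h
      simp [Prod.ext_iff, Fin.ext_iff, hj, hk]

lemma adj_of_out {K N : ℕ} {a b : CGVert K N} (hne : a ≠ b) (h : a.2.2 = b.2.2) :
    (ECG K N).Adj a b := by
  refine (⟨hne, ?_⟩ : a ≠ b ∧ _)
  by_cases hin : a.2.1 = b.2.1
  · refine Or.inl ⟨hin, ?_⟩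
    have hb : a.1 ≠ b.1 := by
      intro hb
      exact hne (Prod.ext hb (Prod.ext hin h))
    cases ha' : a.1 <;> cases hb' : b.1 <;> simp_all
  · exact Or.inr ⟨h, hin⟩

lemma adj_of_in {K N : ℕ} {a b : CGVert K N} (hne : a ≠ b) (h : a.2.1 = b.2.1)
    (hf : a.1 = false ∨ b.1 = false) : (ECG K N).Adj a b :=
  (⟨hne, Or.inl ⟨h, hf⟩⟩ : a ≠ b ∧ _)

lemma fv_true_i {K N : ℕ} {i : Fin K} {v : CGVert K N} (h1 : v.1 = true)
    (h2 : v.2.1 = i) : fv K N i v = K * N + v.2.2.1 := by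
  obtain ⟨b, j, k⟩ := v
  cases b
  · simp at h1
  · simp only at h2
    simp [fv, h2]

lemma fv_true_ne {K N : ℕ} {i : Fin K} {v : CGVert K N} (h1 : v.1 = true)
    (h2 : v.2.1 ≠ i) : fv K N i v = v.2.1.1 * N + v.2.2.1 := by
  obtain ⟨b, j, k⟩ := v
  cases b
  · simp at h1
  · simp only at h2
    simp [fv, h2]

lemma fv_false {K N : ℕ} {i : Fin K} {v : CGVert K N} (h1 : v.1 = false) :
    fv K N i v = K * N + N + (v.2.1.1 * N + v.2.2.1) := by
  obtain ⟨b, j, k⟩ := v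
  cases b
  · simp [fv]
  · simp at h1

lemma hseoS (K N : ℕ) (i : Fin K) :
    ∀ v : ↥{v : CGVert K N | v.1 = true ∨ v.2.1 = i},
      ((ECG K N).induce {v : CGVert K N | v.1 = true ∨ v.2.1 = i}).IsClique
        (insert v {w | ((ECG K N).induce {v : CGVert K N | v.1 = true ∨ v.2.1 = i}).Adj v w ∧
          fv K N i v.1 < fv K N i w.1}) := by
  intro v
  by_cases hvi : v.1.2.1 = i
  · -- input of v is i
    have hfv : K * N ≤ fv K N i v.1 := by
      cases hvb : v.1.1
      · rw [fv_false hvb]; omega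
      · rw [fv_true_i hvb hvi]; omega
    have key : ∀ x : ↥{v : CGVert K N | v.1 = true ∨ v.2.1 = i},
        x ∈ insert v {w : ↥{v : CGVert K N | v.1 = true ∨ v.2.1 = i} |
          ((ECG K N).induce {v : CGVert K N | v.1 = true ∨ v.2.1 = i}).Adj v w ∧
          fv K N i v.1 < fv K N i w.1} →
        x.1.2.1 = i ∧ (x = v ∨ x.1.1 = false) := by
      rintro x (rfl | ⟨hadj, hflt⟩)
      · exact ⟨hvi, Or.inl rfl⟩
      · have hxS : x.1.1 = true ∨ x.1.2.1 = i := x.2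
        have hadj' : (ECG K N).Adj v.1 x.1 := hadj
        obtain ⟨hne, hcase⟩ : v.1 ≠ x.1 ∧ _ := hadj'
        cases hxb : x.1.1 with
        | false =>
          rcases hxS with h' | h'
          · rw [hxb] at h'; exact absurd h' (by simp)
          · exact ⟨h', Or.inr rfl⟩
        | true =>
          exfalso
          by_cases hxi : x.1.2.1 = i
          · rcases hcase with ⟨hin, hf⟩ | ⟨hout, hinne⟩
            · rcases hf with hf | hf
              · have hfv2 : K * N + N ≤ fv K N i v.1 := by rw [fv_false hf]; omega
                have hfx : fv K N i x.1 < K * N + N := by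
                  rw [fv_true_i hxb hxi]
                  have := x.1.2.2.2
                  omega
                omega
              · rw [hxb] at hf; exact absurd hf (by simp)
            · exact hinne (hvi.trans hxi.symm)
          · have hfx2 : fv K N i x.1 < K * N := by
              rw [fv_true_ne hxb hxi]
              exact fv_bound _ _
            omega
    intro a ha b hb hab
    obtain ⟨hai, haf⟩ := key a ha
    obtain ⟨hbi, hbf⟩ := key b hb
    show (ECG K N).Adj a.1 b.1
    refine adj_of_in (Subtype.coe_ne_coe.mpr hab) (hai.trans hbi.symm) ?_
    rcases haf with rfl | haf
    · rcases hbf with rfl | hbf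
      · exact absurd rfl hab
      · exact Or.inr hbf
    · exact Or.inl haf
  · -- v is a broadcast of another input
    have hvt : v.1.1 = true := by
      rcases v.2 with h | h
      · exact h
      · exact absurd h hvi
    have key : ∀ x : ↥{v : CGVert K N | v.1 = true ∨ v.2.1 = i},
        x ∈ insert v {w : ↥{v : CGVert K N | v.1 = true ∨ v.2.1 = i} |
          ((ECG K N).induce {v : CGVert K N | v.1 = true ∨ v.2.1 = i}).Adj v w ∧
          fv K N i v.1 < fv K N i w.1} →
        x.1.2.2 = v.1.2.2 := by
      rintro x (rfl | ⟨hadj, hflt⟩)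
      · rfl
      · have hadj' : (ECG K N).Adj v.1 x.1 := hadj
        obtain ⟨hne, hcase⟩ : v.1 ≠ x.1 ∧ _ := hadj'
        rcases hcase with ⟨hin, hf⟩ | ⟨hout, hinne⟩
        · exfalso
          rcases hf with hf | hf
          · rw [hvt] at hf; exact absurd hf (by simp)
          · have hxS : x.1.1 = true ∨ x.1.2.1 = i := x.2
            rcases hxS with h' | h'
            · rw [hf] at h'; exact absurd h' (by simp)
            · exact hvi (hin.trans h')
        · exact hout.symm
    intro a ha b hb hab
    show (ECG K N).Adj a.1 b.1
    exact adj_of_out (Subtype.coe_ne_coe.mpr hab) ((key a ha).trans (key b hb).symm)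

theorem stmt5 (K N : ℕ) (hK : 0 < K) (hN : 0 < N) (i : Fin K) :
    ((ECG K N).induce {v : CGVert K N | v.1 = true ∨ v.2.1 = i}).IsPerfect := by
  classical
  intro T
  haveI : Fintype ↥T := (Set.toFinite T).fintype
  set H := (((ECG K N).induce {v : CGVert K N | v.1 = true ∨ v.2.1 = i}).induce T) with hH
  have hcol : H.Colorable H.cliqueNum := by
    refine greedy_colorable (Fintype.card ↥T) ↥T H le_rfl
      (fun w => fv K N i w.1.1)
      (fun a b hab => Subtype.ext (Subtype.ext (fv_inj i hab)))
      (seo_induce (hseoS K N i) T) _ ?_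
    intro s hs
    exact IsClique.card_le_cliqueNum (tc := hs)
  refine le_antisymm (by exact_mod_cast hcol.chromaticNumber_le) ?_
  obtain ⟨s, hs⟩ := SimpleGraph.exists_isNClique_cliqueNum (G := H)
  have h := hs.isClique.card_le_chromaticNumber
  rw [hs.card_eq] at h
  exact_mod_cast h
end

section
/- For all positive integers K and N and every i ∈ {1,…,N}, the subgraph of the enhanced conflict graph G_{K,N} induced by the vertex set consisting of all unicast vertices u_{kj} (k ∈ {1,…,K}, j ∈ {1,…,N}) together with the broadcast vertices b_{ki} (k ∈ {1,…,K}) destined to output i is a perfect graph. -/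
open SimpleGraph Pointwise

namespace Stmt7Aux


variable {W A B : Type*}

/-- Kempe-chain reachability in the `α`/`β` colored subgraph of the line graph of the
bipartite multigraph whose edges are elements of `W` with endpoints `r w` and `c w`.
The boolean flag records whether the current edge was entered through its `r`-endpoint. -/
inductive KReach (r : W → A) (c : W → B) (f : W → ℕ) (s : Finset W) (α β : ℕ) (w0 : W) :
    W → Bool → Prop
  | base : KReach r c f s α β w0 w0 true
  | stepr (x y : W) : KReach r c f s α β w0 x true → y ∈ s → y ≠ x →
      (f y = α ∨ f y = β) → c y = c x → KReach r c f s α β w0 y false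
  | stepc (x y : W) : KReach r c f s α β w0 x false → y ∈ s → y ≠ x →
      (f y = α ∨ f y = β) → r y = r x → KReach r c f s α β w0 y true

variable {r : W → A} {c : W → B} {f : W → ℕ} {s : Finset W} {α β : ℕ} {w0 : W}

lemma KReach.invariant
    (hprop : ∀ v ∈ s, ∀ w ∈ s, v ≠ w → (r v = r w ∨ c v = c w) → f v ≠ f w)
    (hw0 : w0 ∈ s) (hfw0 : f w0 = β) {x : W} {fl : Bool}
    (h : KReach r c f s α β w0 x fl) :
    x ∈ s ∧ f x = (if fl then β else α) := by
  induction h with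
  | base => exact ⟨hw0, by simp [hfw0]⟩
  | stepr x y hx hy hne hcol hc ih =>
      refine ⟨hy, ?_⟩
      have hfx : f x = β := by simpa using ih.2
      rcases hcol with h1 | h1
      · simpa using h1
      · exact absurd (h1.trans hfx.symm)
          (hprop y hy x ih.1 hne (Or.inr hc))
  | stepc x y hx hy hne hcol hr ih =>
      refine ⟨hy, ?_⟩
      have hfx : f x = α := by simpa using ih.2
      rcases hcol with h1 | h1
      · exact absurd (h1.trans hfx.symm)
          (hprop y hy x ih.1 hne (Or.inl hr))
      · simpa using h1

lemma KReach.closure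
    (hprop : ∀ v ∈ s, ∀ w ∈ s, v ≠ w → (r v = r w ∨ c v = c w) → f v ≠ f w)
    (hw0 : w0 ∈ s) (hfw0 : f w0 = β)
    (hmissA : ∀ u ∈ s, r u = r w0 → f u ≠ α) {x : W} {fl : Bool}
    (h : KReach r c f s α β w0 x fl) :
    ∀ y ∈ s, y ≠ x → (f y = α ∨ f y = β) → (r y = r x ∨ c y = c x) →
      ∃ fl', KReach r c f s α β w0 y fl' := by
  induction h with
  | base =>
      intro y hy hne hcol hshare
      rcases hshare with hr | hc
      · exfalso
        rcases hcol with h1 | h1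
        · exact hmissA y hy hr h1
        · exact hprop y hy w0 hw0 hne (Or.inl hr) (h1.trans hfw0.symm)
      · exact ⟨false, .stepr w0 y .base hy hne hcol hc⟩
  | stepr x y hx hymem hne hcol hc ih =>
      intro z hz hnez hcolz hshare
      rcases hshare with hr2 | hc2
      · exact ⟨true, .stepc y z (.stepr x y hx hymem hne hcol hc) hz hnez hcolz hr2⟩
      · by_cases hzx : z = x
        · exact ⟨true, hzx ▸ hx⟩
        · exact ih z hz hzx hcolz (Or.inr (hc2.trans hc))
  | stepc x y hx hymem hne hcol hr ih =>
      intro z hz hnez hcolz hshare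
      rcases hshare with hr2 | hc2
      · by_cases hzx : z = x
        · exact ⟨false, hzx ▸ hx⟩
        · exact ih z hz hzx hcolz (Or.inl (hr2.trans hr))
      · exact ⟨false, .stepr y z (.stepc x y hx hymem hne hcol hr) hz hnez hcolz hc2⟩

lemma KReach.notB
    (hprop : ∀ v ∈ s, ∀ w ∈ s, v ≠ w → (r v = r w ∨ c v = c w) → f v ≠ f w)
    (hw0 : w0 ∈ s) (hfw0 : f w0 = β) {b : B}
    (hmissB : ∀ u ∈ s, c u = b → f u ≠ β) {x : W}
    (h : KReach r c f s α β w0 x false) (hcx : c x = b) : False := by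
  cases h with
  | stepr w x hw hxmem hne hcol hc =>
      obtain ⟨hwmem, hfw⟩ := hw.invariant hprop hw0 hfw0
      exact hmissB w hwmem (hc.symm.trans hcx) (by simpa using hfw)

/-- The Kempe-chain exchange: if `α` is missing at `a` and `β` is missing at `b`, we can
recolor so that `β` is missing at both `a` and `b`, without introducing new colors. -/
lemma exchange (r : W → A) (c : W → B) (f : W → ℕ) (s : Finset W) (α β : ℕ) (a : A) (b : B)
    (hprop : ∀ v ∈ s, ∀ w ∈ s, v ≠ w → (r v = r w ∨ c v = c w) → f v ≠ f w)
    (hαβ : α ≠ β)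
    (hmissA : ∀ u ∈ s, r u = a → f u ≠ α) (hmissB : ∀ u ∈ s, c u = b → f u ≠ β) :
    ∃ g : W → ℕ, (∀ u ∈ s, g u = f u ∨ g u = α ∨ g u = β) ∧
      (∀ v ∈ s, ∀ w ∈ s, v ≠ w → (r v = r w ∨ c v = c w) → g v ≠ g w) ∧
      (∀ u ∈ s, r u = a → g u ≠ β) ∧ (∀ u ∈ s, c u = b → g u ≠ β) := by
  classical
  by_cases hw0ex : ∃ w0 ∈ s, r w0 = a ∧ f w0 = β
  case neg =>
    exact ⟨f, fun u _ => Or.inl rfl, hprop,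
      fun u hu hru hfu => hw0ex ⟨u, hu, hru, hfu⟩, hmissB⟩
  obtain ⟨w0, hw0, hrw0, hfw0⟩ := hw0ex
  have hmissA' : ∀ u ∈ s, r u = r w0 → f u ≠ α := fun u hu hru =>
    hmissA u hu (hru.trans hrw0)
  set C : W → Prop := fun u => ∃ fl, KReach r c f s α β w0 u fl with hC
  have hCmem : ∀ u, C u → u ∈ s ∧ (f u = α ∨ f u = β) := by
    rintro u ⟨fl, h⟩
    obtain ⟨hm, hf⟩ := h.invariant hprop hw0 hfw0
    cases fl <;> simp_all <;> tauto
  set g : W → ℕ := fun u => if C u then (if f u = α then β else α) else f u with hgdef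
  have hgC : ∀ u, C u → g u = if f u = α then β else α := fun u hu => by
    simp only [hgdef, if_pos hu]
  have hgN : ∀ u, ¬ C u → g u = f u := fun u hu => by
    simp only [hgdef, if_neg hu]
  have hgCab : ∀ u, C u → g u = α ∨ g u = β := by
    intro u hu
    rw [hgC u hu]
    by_cases h1 : f u = α
    · rw [if_pos h1]; exact Or.inr rfl
    · rw [if_neg h1]; exact Or.inl rfl
  refine ⟨g, ?_, ?_, ?_, ?_⟩
  · intro u _
    by_cases hu : C u
    · rcases hgCab u hu with h | h <;> rw [h] <;> tauto
    · rw [hgN u hu]; exact Or.inl rfl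
  · intro v hv w hw hne hsh
    have hfne := hprop v hv w hw hne hsh
    by_cases Cv : C v
    · by_cases Cw : C w
      · rw [hgC v Cv, hgC w Cw]
        rcases (hCmem v Cv).2 with h1 | h1 <;> rcases (hCmem w Cw).2 with h2 | h2
        · exact absurd (h1.trans h2.symm) hfne
        · rw [if_pos h1, if_neg (h2.trans_ne (Ne.symm hαβ))]
          exact Ne.symm hαβ
        · rw [if_neg (h1.trans_ne (Ne.symm hαβ)), if_pos h2]
          exact hαβ
        · exact absurd (h1.trans h2.symm) hfne
      · obtain ⟨fl, hvr⟩ := id Cv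
        have hwnot : ¬ (f w = α ∨ f w = β) := fun hcol =>
          Cw (hvr.closure hprop hw0 hfw0 hmissA' w hw (Ne.symm hne) hcol
            (by rcases hsh with h | h; exacts [Or.inl h.symm, Or.inr h.symm]))
        push_neg at hwnot
        rw [hgN w Cw]
        rcases hgCab v Cv with h | h <;> rw [h]
        · exact fun h2 => hwnot.1 h2.symm
        · exact fun h2 => hwnot.2 h2.symm
    · by_cases Cw : C w
      · obtain ⟨fl, hwr⟩ := id Cw
        have hvnot : ¬ (f v = α ∨ f v = β) := fun hcol =>
          Cv (hwr.closure hprop hw0 hfw0 hmissA' v hv hne hcol hsh)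
        push_neg at hvnot
        rw [hgN v Cv]
        rcases hgCab w Cw with h | h <;> rw [h]
        · exact hvnot.1
        · exact hvnot.2
      · rw [hgN v Cv, hgN w Cw]; exact hfne
  · -- β missing at a after swap
    intro u hu hru
    by_cases Cu : C u
    · rw [hgC u Cu]
      rcases (hCmem u Cu).2 with h1 | h1
      · exact absurd h1 (hmissA u hu hru)
      · rw [if_neg (h1.trans_ne (Ne.symm hαβ))]
        exact hαβ
    · rw [hgN u Cu]
      intro h3
      by_cases huw : u = w0
      · exact Cu ⟨true, huw ▸ KReach.base⟩
      · exact hprop u hu w0 hw0 huw (Or.inl (hru.trans hrw0.symm)) (h3.trans hfw0.symm)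
  · -- β missing at b after swap
    intro u hu hcu
    by_cases Cu : C u
    · obtain ⟨fl, hur⟩ := Cu
      obtain ⟨_, hfu⟩ := hur.invariant hprop hw0 hfw0
      cases fl with
      | true =>
          have hfub : f u = β := by simpa using hfu
          rw [hgC u ⟨true, hur⟩, if_neg (hfub.trans_ne (Ne.symm hαβ))]
          exact hαβ
      | false =>
          exact absurd hcu (fun hcub => hur.notB hprop hw0 hfw0 hmissB hcub)
    · rw [hgN u Cu]
      exact hmissB u hu hcu

/-- König edge-coloring: a bipartite multigraph whose vertex degrees are all at most `D`
admits a proper edge coloring with `D` colors. Stated for the line graph: elements of `s`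
sharing an `r`-value or a `c`-value get different colors. -/
lemma exists_coloring [DecidableEq A] [DecidableEq B] (r : W → A) (c : W → B) (D : ℕ) :
    ∀ s : Finset W,
      (∀ v ∈ s, (s.filter fun u => r u = r v).card ≤ D) →
      (∀ v ∈ s, (s.filter fun u => c u = c v).card ≤ D) →
      ∃ f : W → ℕ, (∀ v ∈ s, f v < D) ∧
        ∀ v ∈ s, ∀ w ∈ s, v ≠ w → (r v = r w ∨ c v = c w) → f v ≠ f w := by
  intro s
  induction s using Finset.strongInductionOn with
  | _ s ih =>
    intro hA hB
    rcases s.eq_empty_or_nonempty with rfl | ⟨v, hv⟩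
    · exact ⟨fun _ => 0, by simp, by simp⟩
    classical
    set s' := s.erase v with hs'
    have hsub : s' ⊆ s := Finset.erase_subset _ _
    have hA' : ∀ u ∈ s', (s'.filter fun w => r w = r u).card ≤ D := fun u hu =>
      le_trans (Finset.card_le_card (Finset.filter_subset_filter _ hsub)) (hA u (hsub hu))
    have hB' : ∀ u ∈ s', (s'.filter fun w => c w = c u).card ≤ D := fun u hu =>
      le_trans (Finset.card_le_card (Finset.filter_subset_filter _ hsub)) (hB u (hsub hu))
    obtain ⟨f, hflt, hfprop⟩ := ih s' (Finset.erase_ssubset hv) hA' hB'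
    have hFA : (s'.filter fun u => r u = r v).card < D := by
      have h1 : v ∈ s.filter fun u => r u = r v := Finset.mem_filter.mpr ⟨hv, rfl⟩
      have h2 : (s'.filter fun u => r u = r v) = (s.filter fun u => r u = r v).erase v := by
        rw [hs', Finset.filter_erase]
      rw [h2]
      exact lt_of_lt_of_le (Finset.card_erase_lt_of_mem h1) (hA v hv)
    have hFB : (s'.filter fun u => c u = c v).card < D := by
      have h1 : v ∈ s.filter fun u => c u = c v := Finset.mem_filter.mpr ⟨hv, rfl⟩
      have h2 : (s'.filter fun u => c u = c v) = (s.filter fun u => c u = c v).erase v := by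
        rw [hs', Finset.filter_erase]
      rw [h2]
      exact lt_of_lt_of_le (Finset.card_erase_lt_of_mem h1) (hB v hv)
    set missA := Finset.range D \ ((s'.filter fun u => r u = r v).image f) with hmA
    set missB := Finset.range D \ ((s'.filter fun u => c u = c v).image f) with hmB
    have hmissAne : missA.Nonempty := by
      rw [hmA, Finset.sdiff_nonempty]
      intro hsubs
      have := Finset.card_le_card hsubs
      rw [Finset.card_range] at this
      exact absurd (le_trans this Finset.card_image_le) (not_le.mpr hFA)
    have hmissBne : missB.Nonempty := by
      rw [hmB, Finset.sdiff_nonempty]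
      intro hsubs
      have := Finset.card_le_card hsubs
      rw [Finset.card_range] at this
      exact absurd (le_trans this Finset.card_image_le) (not_le.mpr hFB)
    have hmemA : ∀ γ ∈ missA, γ < D ∧ ∀ u ∈ s', r u = r v → f u ≠ γ := by
      intro γ hγ
      rw [hmA, Finset.mem_sdiff, Finset.mem_range] at hγ
      refine ⟨hγ.1, fun u hu hru hfu => hγ.2 ?_⟩
      exact Finset.mem_image.mpr ⟨u, Finset.mem_filter.mpr ⟨hu, hru⟩, hfu⟩
    have hmemB : ∀ γ ∈ missB, γ < D ∧ ∀ u ∈ s', c u = c v → f u ≠ γ := by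
      intro γ hγ
      rw [hmB, Finset.mem_sdiff, Finset.mem_range] at hγ
      refine ⟨hγ.1, fun u hu hcu hfu => hγ.2 ?_⟩
      exact Finset.mem_image.mpr ⟨u, Finset.mem_filter.mpr ⟨hu, hcu⟩, hfu⟩
    have hsmem : ∀ u ∈ s, u ≠ v → u ∈ s' := fun u hu hne => Finset.mem_erase.mpr ⟨hne, hu⟩
    by_cases hint : (missA ∩ missB).Nonempty
    · obtain ⟨γ, hγ⟩ := hint
      rw [Finset.mem_inter] at hγ
      refine ⟨Function.update f v γ, ?_, ?_⟩
      · intro u hu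
        by_cases huv : u = v
        · rw [huv, Function.update_self]; exact (hmemA γ hγ.1).1
        · rw [Function.update_of_ne huv]; exact hflt u (hsmem u hu huv)
      · intro x hx y hy hne hsh
        by_cases hxv : x = v <;> by_cases hyv : y = v
        · exact absurd (hxv.trans hyv.symm) hne
        · subst hxv
          rw [Function.update_self, Function.update_of_ne hyv]
          intro heq
          rcases hsh with h | h
          · exact (hmemA γ hγ.1).2 y (hsmem y hy hyv) h.symm heq.symm
          · exact (hmemB γ hγ.2).2 y (hsmem y hy hyv) h.symm heq.symm
        · subst hyv
          rw [Function.update_self, Function.update_of_ne hxv]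
          intro heq
          rcases hsh with h | h
          · exact (hmemA γ hγ.1).2 x (hsmem x hx hxv) h heq
          · exact (hmemB γ hγ.2).2 x (hsmem x hx hxv) h heq
        · rw [Function.update_of_ne hxv, Function.update_of_ne hyv]
          exact hfprop x (hsmem x hx hxv) y (hsmem y hy hyv) hne hsh
    · obtain ⟨α, hα⟩ := hmissAne
      obtain ⟨β, hβ⟩ := hmissBne
      have hαβ : α ≠ β := by
        intro h
        exact hint ⟨α, Finset.mem_inter.mpr ⟨hα, h ▸ hβ⟩⟩
      obtain ⟨g, hgval, hgprop, hgA, hgB⟩ := exchange r c f s' α β (r v) (c v) hfprop hαβ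
        (fun u hu hru => (hmemA α hα).2 u hu hru) (fun u hu hcu => (hmemB β hβ).2 u hu hcu)
      refine ⟨Function.update g v β, ?_, ?_⟩
      · intro u hu
        by_cases huv : u = v
        · rw [huv, Function.update_self]; exact (hmemB β hβ).1
        · rw [Function.update_of_ne huv]
          rcases hgval u (hsmem u hu huv) with h | h | h <;> rw [h]
          · exact hflt u (hsmem u hu huv)
          · exact (hmemA α hα).1
          · exact (hmemB β hβ).1
      · intro x hx y hy hne hsh
        by_cases hxv : x = v <;> by_cases hyv : y = v
        · exact absurd (hxv.trans hyv.symm) hne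
        · subst hxv
          rw [Function.update_self, Function.update_of_ne hyv]
          intro heq
          rcases hsh with h | h
          · exact hgA y (hsmem y hy hyv) h.symm heq.symm
          · exact hgB y (hsmem y hy hyv) h.symm heq.symm
        · subst hyv
          rw [Function.update_self, Function.update_of_ne hxv]
          intro heq
          rcases hsh with h | h
          · exact hgA x (hsmem x hx hxv) h heq
          · exact hgB x (hsmem x hx hxv) h heq
        · rw [Function.update_of_ne hxv, Function.update_of_ne hyv]
          exact hgprop x (hsmem x hx hxv) y (hsmem y hy hyv) hne hsh

/-- A graph whose adjacency is "distinct and sharing a row or a column" (a line graph of a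
bipartite multigraph) has chromatic number equal to its clique number. -/
lemma chrom_eq_clique [Fintype W] [DecidableEq A] [DecidableEq B]
    (G : SimpleGraph W) (r : W → A) (c : W → B)
    (hadj : ∀ v w, G.Adj v w ↔ v ≠ w ∧ (r v = r w ∨ c v = c w)) :
    G.chromaticNumber = (G.cliqueNum : ℕ∞) := by
  classical
  have hfibA : ∀ v : W, (Finset.univ.filter fun u => r u = r v).card ≤ G.cliqueNum := by
    intro v
    refine @SimpleGraph.IsClique.card_le_cliqueNum _ G _ _ ?_
    intro x hx y hy hne
    simp only [Finset.coe_filter, Set.mem_setOf_eq] at hx hy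
    exact (hadj x y).mpr ⟨hne, Or.inl (hx.2.trans hy.2.symm)⟩
  have hfibB : ∀ v : W, (Finset.univ.filter fun u => c u = c v).card ≤ G.cliqueNum := by
    intro v
    refine @SimpleGraph.IsClique.card_le_cliqueNum _ G _ _ ?_
    intro x hx y hy hne
    simp only [Finset.coe_filter, Set.mem_setOf_eq] at hx hy
    exact (hadj x y).mpr ⟨hne, Or.inr (hx.2.trans hy.2.symm)⟩
  obtain ⟨f, hflt, hfprop⟩ := exists_coloring r c G.cliqueNum Finset.univ
    (fun v _ => hfibA v) (fun v _ => hfibB v)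
  have hcol : G.Colorable G.cliqueNum := by
    refine ⟨SimpleGraph.Coloring.mk (fun v => ⟨f v, hflt v (Finset.mem_univ v)⟩) ?_⟩
    intro v w hvw
    obtain ⟨hne, hsh⟩ := (hadj v w).mp hvw
    intro heq
    exact hfprop v (Finset.mem_univ v) w (Finset.mem_univ w) hne hsh (congrArg Fin.val heq)
  refine le_antisymm hcol.chromaticNumber_le ?_
  obtain ⟨t, ht⟩ := G.exists_isNClique_cliqueNum
  calc (G.cliqueNum : ℕ∞) = (t.card : ℕ∞) := by rw [ht.card_eq]
    _ ≤ G.chromaticNumber := ht.isClique.card_le_chromaticNumber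

end Stmt7Aux



private lemma ecg_cond_iff {K N : ℕ} (i : Fin N) (x y : CGVert K N)
    (hx : x.1 = false ∨ x.2.2 = i) (hy : y.1 = false ∨ y.2.2 = i) (hne : x ≠ y) :
    ((x.2.1 = y.2.1 ∧ (x.1 = false ∨ y.1 = false)) ∨ (x.2.2 = y.2.2 ∧ x.2.1 ≠ y.2.1)) ↔
      (x.2.1 = y.2.1 ∨ (if x.1 then i else x.2.2) = (if y.1 then i else y.2.2)) := by
  obtain ⟨bx, kx, jx⟩ := x
  obtain ⟨by', ky, jy⟩ := y
  cases bx <;> cases by' <;> simp_all [Prod.ext_iff] <;> tauto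

theorem stmt7 (K N : ℕ) (hK : 0 < K) (hN : 0 < N) (i : Fin N) :
    ((ECG K N).induce {v : CGVert K N | v.1 = false ∨ v.2.2 = i}).IsPerfect := by
  intro S
  classical
  haveI : Fintype ↥S := Fintype.ofFinite _
  refine Stmt7Aux.chrom_eq_clique _ (fun v => (v.1.1 : CGVert K N).2.1)
    (fun v => if (v.1.1 : CGVert K N).1 then i else (v.1.1 : CGVert K N).2.2) ?_
  intro v w
  have base : ((((ECG K N).induce _).induce S).Adj v w) ↔
      ((v.1.1 : CGVert K N) ≠ w.1.1 ∧
        ((v.1.1.2.1 = w.1.1.2.1 ∧ (v.1.1.1 = false ∨ w.1.1.1 = false)) ∨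
         (v.1.1.2.2 = w.1.1.2.2 ∧ v.1.1.2.1 ≠ w.1.1.2.1))) := Iff.rfl
  rw [base]
  constructor
  · rintro ⟨hne, hcond⟩
    have hne' : v ≠ w := fun h => hne (by rw [h])
    exact ⟨hne', (ecg_cond_iff i v.1.1 w.1.1 v.1.2 w.1.2 hne).mp hcond⟩
  · rintro ⟨hne, hcond⟩
    have hne' : (v.1.1 : CGVert K N) ≠ w.1.1 := fun h => hne (Subtype.ext (Subtype.ext h))
    exact ⟨hne', (ecg_cond_iff i v.1.1 w.1.1 v.1.2 w.1.2 hne').mpr hcond⟩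
end

section
/- Fix positive integers K, N and i ∈ {1,…,K}, and let G_i be the subgraph of the enhanced conflict graph G_{K,N} induced by all broadcast vertices together with the unicast vertices u_{ij} (j ∈ {1,…,N}) from input i. Then every induced cycle of odd length at least 5 in G_i contains no broadcast vertex b_{jk} with j ≠ i; equivalently, its vertices all lie in B_i ∪ U_i = {b_{ij} : j} ∪ {u_{ij} : j}. -/
open SimpleGraph Pointwise

theorem stmt9 (K N : ℕ) (hK : 0 < K) (hN : 0 < N) (i : Fin K)
    (n : ℕ) (hn : 5 ≤ n) (hodd : Odd n)
    (S : Set ↥{v : CGVert K N | v.1 = true ∨ v.2.1 = i})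
    (hiso : Nonempty
      (((ECG K N).induce {v : CGVert K N | v.1 = true ∨ v.2.1 = i}).induce S ≃g cycleGraph n)) :
    ∀ v ∈ S, (↑v : CGVert K N).2.1 = i := by
  intro v hv
  by_contra hvi
  obtain ⟨φ⟩ := hiso
  -- `v` is a broadcast vertex from an input `≠ i`
  have hvb : (↑v : CGVert K N).1 = true := by
    rcases v.2 with h | h
    · exact h
    · exact absurd h hvi
  -- set up the cycle neighbors
  obtain ⟨m, rfl⟩ : ∃ m, n = m + 2 := ⟨n - 2, by omega⟩
  have hm : 3 ≤ m := by omega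
  set w : ↥S := ⟨v, hv⟩ with hw
  set p : Fin (m + 2) := φ w with hp
  open Fin.NatCast in
  have h2 : ((2 : Fin (m+2)) : ℕ) = 2 := by
    have : ((2 : ℕ) : Fin (m+2)) = (2 : Fin (m+2)) := by norm_cast
    rw [← this, Fin.val_cast_of_lt (by omega)]
  open Fin.NatCast in
  have h3 : ((3 : Fin (m+2)) : ℕ) = 3 := by
    have : ((3 : ℕ) : Fin (m+2)) = (3 : Fin (m+2)) := by norm_cast
    rw [← this, Fin.val_cast_of_lt (by omega)]
  have h21 : (2 : Fin (m+2)) ≠ 1 := by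
    intro h; apply_fun Fin.val at h; rw [h2] at h; simp at h
  have h20 : (2 : Fin (m+2)) ≠ 0 := by
    intro h; apply_fun Fin.val at h; rw [h2] at h; simp at h
  have h30 : (3 : Fin (m+2)) ≠ 0 := by
    intro h; apply_fun Fin.val at h; rw [h3] at h; simp at h
  have hc1 : (cycleGraph (m+2)).Adj p (p+1) := by
    rw [cycleGraph_adj]; right; rw [add_sub_cancel_left]
  have hc2 : (cycleGraph (m+2)).Adj p (p-1) := by
    rw [cycleGraph_adj]; left; rw [sub_sub_cancel]
  open Fin.CommRing in
  have hc3 : ¬ (cycleGraph (m+2)).Adj (p+1) (p-1) := by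
    rw [cycleGraph_adj]; push_neg
    constructor
    · have : p + 1 - (p - 1) = 2 := by ring
      rw [this]; exact h21
    · have : p - 1 - (p + 1) = -2 := by ring
      rw [this]; intro h
      exact h30 (by linear_combination -h)
  open Fin.CommRing in
  have hc4 : (p+1) ≠ (p-1) := by
    intro h
    exact h20 (by linear_combination h)
  -- pull back through the isomorphism
  set a := φ.symm (p+1) with ha
  set b := φ.symm (p-1) with hb
  have hwa := φ.map_adj_iff.mp (show (cycleGraph (m+2)).Adj (φ w) (φ a) by
    rw [ha, φ.apply_symm_apply]; exact hc1)
  have hwb := φ.map_adj_iff.mp (show (cycleGraph (m+2)).Adj (φ w) (φ b) by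
    rw [hb, φ.apply_symm_apply]; exact hc2)
  have hnab : ¬ (((ECG K N).induce {v : CGVert K N | v.1 = true ∨ v.2.1 = i}).induce S).Adj a b := by
    intro h
    apply hc3
    have := φ.map_adj_iff.mpr h
    rwa [ha, hb, φ.apply_symm_apply, φ.apply_symm_apply] at this
  have habne : a ≠ b := fun h => hc4 (φ.symm.injective h)
  -- unfold to the base graph
  have hwa' : (ECG K N).Adj (↑v : CGVert K N) (↑↑a : CGVert K N) := hwa
  have hwb' : (ECG K N).Adj (↑v : CGVert K N) (↑↑b : CGVert K N) := hwb
  set A : CGVert K N := (↑↑a : CGVert K N)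
  set B : CGVert K N := (↑↑b : CGVert K N)
  -- each neighbor of the broadcast vertex `v` shares its output and has a different input
  have key : ∀ x : ↥S, (ECG K N).Adj (↑v) (↑↑x : CGVert K N) →
      (↑↑x : CGVert K N).2.2 = (↑v : CGVert K N).2.2 ∧
      (↑↑x : CGVert K N).2.1 ≠ (↑v : CGVert K N).2.1 := by
    intro x hx
    obtain ⟨hne, h | h⟩ := hx
    · -- same input: forces the neighbor to be unicast, hence input `i`, contradiction
      exfalso
      have hxu : (↑↑x : CGVert K N).1 = false := by
        rcases h.2 with h' | h'
        · rw [hvb] at h'; exact absurd h' (by simp)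
        · exact h'
      have : (↑↑x : CGVert K N).2.1 = i := by
        rcases (↑x : ↥{v : CGVert K N | v.1 = true ∨ v.2.1 = i}).2 with h' | h'
        · rw [hxu] at h'; exact absurd h' (by simp)
        · exact h'
      exact hvi (h.1.trans this)
    · exact ⟨h.1.symm, fun h' => h.2 h'.symm⟩
  obtain ⟨hAo, hAi⟩ := key a hwa'
  obtain ⟨hBo, hBi⟩ := key b hwb'
  -- but then the two neighbors are adjacent: a chord, contradiction
  apply hnab
  have hABne : A ≠ B := by
    intro h
    exact habne (Subtype.ext (Subtype.ext h))
  show (ECG K N).Adj A B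
  refine ⟨hABne, ?_⟩
  by_cases hin : A.2.1 = B.2.1
  · left
    refine ⟨hin, ?_⟩
    have hout : A.2.2 = B.2.2 := hAo.trans hBo.symm
    have hb1 : A.1 ≠ B.1 := by
      intro h
      exact hABne (Prod.ext h (Prod.ext hin hout))
    rcases Bool.eq_false_or_eq_true A.1 with h | h
    · right
      rcases Bool.eq_false_or_eq_true B.1 with h' | h'
      · exact absurd (h.trans h'.symm) hb1
      · exact h'
    · exact Or.inl h
  · right
    exact ⟨hAo.trans hBo.symm, hin⟩
end

section
/- Fix positive integers K, N and i ∈ {1,…,K}, and let G_i be the subgraph of the enhanced conflict graph G_{K,N} induced by all broadcast vertices together with the unicast vertices u_{ij} (j ∈ {1,…,N}) from input i. Then the complement graph of G_i contains no induced cycle of odd length at least 5; that is, G_i contains no odd anti-hole. -/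
open SimpleGraph Pointwise

/- ### auxiliary lemmas -/

open Fin.CommRing

lemma natcast_ne_zero' (m k : ℕ) (h1 : 0 < k) (h2 : k < m+5) : ((k:ℕ) : Fin (m+5)) ≠ 0 := by
  intro h
  have := congrArg Fin.val h
  rw [Fin.val_cast_of_lt h2] at this
  simp at this
  omega

lemma adj_iff' (m : ℕ) (u v : Fin (m+5)) :
    (cycleGraph (m+5)).Adj u v ↔ (u - v = 1 ∨ v - u = 1) := by
  rw [cycleGraph_adj']
  have h1 : (1 : Fin (m+5)).val = 1 := Fin.val_one (m+3)
  constructor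
  · rintro (h | h)
    · exact Or.inl (Fin.ext (by rw [h1]; exact h))
    · exact Or.inr (Fin.ext (by rw [h1]; exact h))
  · rintro (h | h)
    · exact Or.inl (by rw [h, h1])
    · exact Or.inr (by rw [h, h1])

lemma adj_succ (m : ℕ) (a : Fin (m+5)) : (cycleGraph (m+5)).Adj a (a+1) := by
  rw [adj_iff']; right; ring

lemma not_adj_two (m : ℕ) (a : Fin (m+5)) : ¬ (cycleGraph (m+5)).Adj a (a+2) := by
  rw [adj_iff']
  rintro (h | h)
  · apply natcast_ne_zero' m 3 (by omega) (by omega)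
    push_cast
    linear_combination -h
  · apply natcast_ne_zero' m 1 (by omega) (by omega)
    push_cast
    linear_combination h

lemma not_adj_three (m : ℕ) (a : Fin (m+5)) : ¬ (cycleGraph (m+5)).Adj a (a+3) := by
  rw [adj_iff']
  rintro (h | h)
  · apply natcast_ne_zero' m 4 (by omega) (by omega)
    push_cast
    linear_combination -h
  · apply natcast_ne_zero' m 2 (by omega) (by omega)
    push_cast
    linear_combination h

lemma ne_add_two (m : ℕ) (a : Fin (m+5)) : a ≠ a + 2 := by
  intro h
  apply natcast_ne_zero' m 2 (by omega) (by omega)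
  push_cast
  linear_combination -h

lemma sub_one_ne_add_one (m : ℕ) (c : Fin (m+5)) : c - 1 ≠ c + 1 := by
  intro h
  apply natcast_ne_zero' m 2 (by omega) (by omega)
  push_cast
  linear_combination -h

lemma sub_one_ne_add_two (m : ℕ) (c : Fin (m+5)) : c - 1 ≠ c + 2 := by
  intro h
  apply natcast_ne_zero' m 3 (by omega) (by omega)
  push_cast
  linear_combination -h

lemma two_mul_half (m : ℕ) (hodd : Odd (m+5)) :
    (2 : Fin (m+5)) * ((((m+6)/2 : ℕ)) : Fin (m+5)) = 1 := by
  obtain ⟨t, ht⟩ := hodd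
  have h2 : (m+6)/2 = t + 1 := by omega
  rw [h2]
  haveI : NeZero (m+5) := ⟨by omega⟩
  have hB : ((m + 5 : ℕ) : Fin (m+5)) = 0 := Fin.natCast_self _
  have hA := congrArg (fun k : ℕ => (k : Fin (m+5))) ht
  push_cast at hB hA ⊢
  linear_combination hB - hA

lemma core_lemma (m N : ℕ) (hodd : Odd (m+5)) (B : Fin (m+5) → Bool) (o : Fin (m+5) → Fin N)
    (F1 : ∀ a b, (cycleGraph (m+5)).Adj a b → o a ≠ o b)
    (F2 : ∀ a b, a ≠ b → B a = true → B b = true → o a ≠ o b → (cycleGraph (m+5)).Adj a b)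
    (F3 : ∀ a b, (cycleGraph (m+5)).Adj a b → B a = false → B b = true) : False := by
  set t : ℕ := (m+6)/2 with ht
  have key : (2 : Fin (m+5)) * (t : Fin (m+5)) = 1 := two_mul_half m hodd
  by_cases hU : ∃ a, B a = false
  · obtain ⟨a0, ha0⟩ := hU
    have step : ∀ c : Fin (m+5), B c = false → B (c+2) = false := by
      intro c hc
      by_contra hb2
      rw [Bool.not_eq_false] at hb2
      have hb1 : B (c+1) = true := F3 c (c+1) (adj_succ m c) hc
      have hbm1 : B (c-1) = true := by
        refine F3 c (c-1) ?_ hc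
        have := adj_succ m (c-1)
        simpa using this.symm
      have heq : o (c-1) = o (c+1) := by
        by_contra hne
        have hadj := F2 (c-1) (c+1) (sub_one_ne_add_one m c) hbm1 hb1 hne
        have h' : (c+1) = (c-1) + 2 := by ring
        rw [h'] at hadj
        exact not_adj_two m (c-1) hadj
      have hne2 : o (c+1) ≠ o (c+2) := F1 (c+1) (c+2)
        (by have := adj_succ m (c+1); simpa [add_assoc, one_add_one_eq_two] using this)
      have hadj := F2 (c-1) (c+2) (sub_one_ne_add_two m c) hbm1 hb2 (by rw [heq]; exact hne2)
      have h' : (c+2) = (c-1) + 3 := by ring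
      rw [h'] at hadj
      exact not_adj_three m (c-1) hadj
    have all : ∀ k : ℕ, B (a0 + 2 * (k : Fin (m+5))) = false := by
      intro k
      induction k with
      | zero => simpa using ha0
      | succ k ih =>
        have h' : a0 + 2 * ((k+1 : ℕ) : Fin (m+5)) = (a0 + 2 * (k : Fin (m+5))) + 2 := by
          push_cast; ring
        rw [h']
        exact step _ ih
    have h1 : B (a0 + 1) = false := by
      have := all t
      rwa [key] at this
    have := F3 a0 (a0+1) (adj_succ m a0) ha0
    rw [h1] at this
    exact Bool.false_ne_true this
  · push_neg at hU
    simp only [Bool.not_eq_false] at hU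
    have step : ∀ c : Fin (m+5), o (c+2) = o c := by
      intro c
      by_contra hne
      exact not_adj_two m c (F2 c (c+2) (ne_add_two m c) (hU c) (hU (c+2)) (Ne.symm hne))
    have all : ∀ (a : Fin (m+5)) (k : ℕ), o (a + 2 * (k : Fin (m+5))) = o a := by
      intro a k
      induction k with
      | zero => simp
      | succ k ih =>
        have h' : a + 2 * ((k+1 : ℕ) : Fin (m+5)) = (a + 2 * (k : Fin (m+5))) + 2 := by
          push_cast; ring
        rw [h', step, ih]
    have h1 : o ((0 : Fin (m+5)) + 1) = o 0 := by
      have := all 0 t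
      rwa [key] at this
    exact F1 0 (0+1) (adj_succ m 0) h1.symm

theorem stmt11 (K N : ℕ) (hK : 0 < K) (hN : 0 < N) (i : Fin K) :
    ¬ (((ECG K N).induce {v : CGVert K N | v.1 = true ∨ v.2.1 = i})ᶜ).HasOddHole := by
  rintro ⟨n, T, hn5, hodd, ⟨e⟩⟩
  obtain ⟨m, rfl⟩ : ∃ m, n = m + 5 := ⟨n - 5, by omega⟩
  set S : Set (CGVert K N) := {v | v.1 = true ∨ v.2.1 = i} with hS
  let f := e.symm
  let v : Fin (m+5) → CGVert K N := fun a => ((f a : S) : CGVert K N)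
  have hmem : ∀ a, (v a).1 = true ∨ (v a).2.1 = i := fun a => (f a : S).property
  have hinj : Function.Injective v := by
    intro a b h
    exact f.injective (Subtype.ext (Subtype.ext h))
  have hA : ∀ a b, (cycleGraph (m+5)).Adj a b ↔ (v a ≠ v b ∧ ¬ (ECG K N).Adj (v a) (v b)) := by
    intro a b
    rw [← f.map_adj_iff]
    simp only [comap_adj, compl_adj, Function.Embedding.coe_subtype, ne_eq, Subtype.ext_iff]
    exact Iff.rfl
  refine core_lemma m N hodd (fun a => (v a).1) (fun a => (v a).2.2) ?_ ?_ ?_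
  · -- F1 : adjacent → outputs differ
    intro a b hadj heq
    obtain ⟨hne, hnadj⟩ := (hA a b).1 hadj
    apply hnadj
    refine ⟨hne, ?_⟩
    by_cases hin : (v a).2.1 = (v b).2.1
    · left
      refine ⟨hin, ?_⟩
      have hbne : (v a).1 ≠ (v b).1 := by
        intro h1
        exact hne (Prod.ext h1 (Prod.ext hin heq))
      cases hva : (v a).1 with
      | false => exact Or.inl rfl
      | true =>
        cases hvb : (v b).1 with
        | false => exact Or.inr rfl
        | true => exact absurd (hva.trans hvb.symm) hbne
    · exact Or.inr ⟨heq, hin⟩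
  · -- F2 : two broadcasts with different outputs are adjacent
    intro a b hne ha hb ho
    rw [hA]
    refine ⟨fun h => hne (hinj h), fun hadj => ?_⟩
    rcases hadj.2 with ⟨_, h | h⟩ | ⟨h, _⟩
    · rw [ha] at h; exact absurd h (by simp)
    · rw [hb] at h; exact absurd h (by simp)
    · exact ho h
  · -- F3 : neighbor of a unicast is a broadcast
    intro a b hadj ha
    obtain ⟨hne, hnadj⟩ := (hA a b).1 hadj
    by_contra hb
    simp only [Bool.not_eq_true] at hb
    have hia : (v a).2.1 = i := (hmem a).resolve_left (by rw [ha]; exact Bool.false_ne_true)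
    have hib : (v b).2.1 = i := (hmem b).resolve_left (by rw [hb]; exact Bool.false_ne_true)
    exact hnadj ⟨hne, Or.inl ⟨hia.trans hib.symm, Or.inl ha⟩⟩
end

section
/- Fix positive integers K, N and i ∈ {1,…,N}, and let G^o_{1,i} be the subgraph of the enhanced conflict graph G_{K,N} induced by all broadcast vertices together with the unicast vertices u_{ki} (k ∈ {1,…,K}) destined to output i. Then G^o_{1,i} contains no induced cycle of odd length at least 5 (no odd hole). -/
open SimpleGraph Pointwise

theorem stmt12 (K N : ℕ) (hK : 0 < K) (hN : 0 < N) (i : Fin N) :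
    ¬ ((ECG K N).induce {v : CGVert K N | v.1 = true ∨ v.2.2 = i}).HasOddHole := by
  rintro ⟨n, S, hn5, -, ⟨e⟩⟩
  haveI : NeZero n := ⟨by omega⟩
  set f : Fin n → CGVert K N := fun x => (e.symm x).1.1 with hf
  have hmem : ∀ x, (f x).1 = true ∨ (f x).2.2 = i := fun x => (e.symm x).1.2
  have hinj : ∀ x y : Fin n, f x = f y → x = y := by
    intro x y h
    exact e.symm.injective (Subtype.ext (Subtype.ext h))
  have hadjf : ∀ x y, (cycleGraph n).Adj x y ↔ (ECG K N).Adj (f x) (f y) := by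
    intro x y
    rw [← e.symm.map_adj_iff]
    rfl
  set lab : Fin n → Option (Fin N) :=
    fun x => if (f x).2.2 = i then none else some (f x).2.2 with hlab
  have hnone : ∀ x, lab x = none ↔ (f x).2.2 = i := by
    intro x; by_cases h : (f x).2.2 = i <;> simp [hlab, h]
  have hout : ∀ x y, lab x = lab y → (f x).2.2 = (f y).2.2 := by
    intro x y h
    simp only [hlab] at h
    by_cases hx : (f x).2.2 = i <;> by_cases hy : (f y).2.2 = i
    · exact hx.trans hy.symm
    · rw [if_pos hx, if_neg hy] at h; exact absurd h (by simp)
    · rw [if_neg hx, if_pos hy] at h; exact absurd h (by simp)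
    · rw [if_neg hx, if_neg hy] at h; exact Option.some_injective _ h
  have hA : ∀ x y, x ≠ y → lab x = lab y → (cycleGraph n).Adj x y := by
    intro x y hne h
    rw [hadjf]
    refine ⟨fun hfe => hne (hinj _ _ hfe), ?_⟩
    have ho := hout x y h
    by_cases hin : (f x).2.1 = (f y).2.1
    · refine Or.inl ⟨hin, ?_⟩
      rcases Bool.eq_false_or_eq_true (f y).1 with hc | hc
      · rcases Bool.eq_false_or_eq_true (f x).1 with hb | hb
        · exact absurd (hinj x y (Prod.ext_iff.mpr ⟨hb.trans hc.symm,
            Prod.ext_iff.mpr ⟨hin, ho⟩⟩)) hne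
        · exact Or.inl hb
      · exact Or.inr hc
    · exact Or.inr ⟨ho, hin⟩
  have hB : ∀ x y, (cycleGraph n).Adj x y → (f x).2.2 ≠ i → (f y).2.2 ≠ i →
      (f x).2.2 = (f y).2.2 := by
    intro x y hxy hx hy
    rw [hadjf] at hxy
    rcases hxy.2 with ⟨-, hb⟩ | ⟨h1, -⟩
    · rcases hb with hb | hb
      · rcases hmem x with h | h
        · rw [h] at hb; exact Bool.noConfusion hb
        · exact absurd h hx
      · rcases hmem y with h | h
        · rw [h] at hb; exact Bool.noConfusion hb
        · exact absurd h hy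
    · exact h1
  -- cycle graph arithmetic
  have h1v : (1 : Fin n).val = 1 := by
    rw [Fin.val_one', Nat.mod_eq_of_lt (by omega)]
  have hcyc : ∀ u v : Fin n, (cycleGraph n).Adj u v ↔ u = v + 1 ∨ v = u + 1 := by
    intro u v
    rw [cycleGraph_adj']
    constructor
    · rintro (h | h)
      · left
        have h2 : u - v = 1 := Fin.val_injective (h.trans h1v.symm)
        rw [sub_eq_iff_eq_add] at h2
        rw [h2, add_comm]
      · right
        have h2 : v - u = 1 := Fin.val_injective (h.trans h1v.symm)
        rw [sub_eq_iff_eq_add] at h2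
        rw [h2, add_comm]
    · rintro (h | h)
      · left; rw [h, add_sub_cancel_left, h1v]
      · right; rw [h, add_sub_cancel_left, h1v]
  open Fin.NatCast in
  have hnek : ∀ (k : ℕ), 0 < k → k < n → ∀ a : Fin n, a + (k : Fin n) ≠ a := by
    intro k hk hkn a h
    have h2 : (k : Fin n) = 0 := add_eq_left.mp h
    have h3 := congrArg Fin.val h2
    rw [Fin.val_cast_of_lt hkn] at h3
    simp at h3
    omega
  open Fin.NatCast in
  have hk1 : ∀ a : Fin n, a + ((1 : ℕ) : Fin n) = a + 1 := by intro a; push_cast; ring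
  open Fin.NatCast Fin.CommRing in
  have hk2 : ∀ a : Fin n, a + ((2 : ℕ) : Fin n) = a + 1 + 1 := by intro a; push_cast; ring
  open Fin.NatCast Fin.CommRing in
  have hk3 : ∀ a : Fin n, a + ((3 : ℕ) : Fin n) = a + 1 + 1 + 1 := by
    intro a; push_cast; ring
  open Fin.NatCast Fin.CommRing in
  have hk4 : ∀ a : Fin n, a + ((4 : ℕ) : Fin n) = a + 1 + 1 + 1 + 1 := by
    intro a; push_cast; ring
  have hne1 : ∀ a : Fin n, a + 1 ≠ a := fun a h =>
    hnek 1 one_pos (by omega) a ((hk1 a).trans h)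
  have hne2 : ∀ a : Fin n, a + 1 + 1 ≠ a := fun a h =>
    hnek 2 (by norm_num) (by omega) a ((hk2 a).trans h)
  have hne3 : ∀ a : Fin n, a + 1 + 1 + 1 ≠ a := fun a h =>
    hnek 3 (by norm_num) (by omega) a ((hk3 a).trans h)
  have hne4 : ∀ a : Fin n, a + 1 + 1 + 1 + 1 ≠ a := fun a h =>
    hnek 4 (by norm_num) (by omega) a ((hk4 a).trans h)
  -- three consecutive labeled vertices give a chord
  have final : ∀ a : Fin n, lab a ≠ none → lab (a + 1) ≠ none →
      lab (a + 1 + 1) ≠ none → False := by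
    intro a l0 l1 l2
    have g0 : (f a).2.2 ≠ i := fun h => l0 ((hnone a).mpr h)
    have g1 : (f (a + 1)).2.2 ≠ i := fun h => l1 ((hnone _).mpr h)
    have g2 : (f (a + 1 + 1)).2.2 ≠ i := fun h => l2 ((hnone _).mpr h)
    have a01 : (cycleGraph n).Adj a (a + 1) := (hcyc _ _).mpr (Or.inr rfl)
    have a12 : (cycleGraph n).Adj (a + 1) (a + 1 + 1) := (hcyc _ _).mpr (Or.inr rfl)
    have e01 := hB _ _ a01 g0 g1
    have e12 := hB _ _ a12 g1 g2
    have hl : lab a = lab (a + 1 + 1) := by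
      simp only [hlab]
      rw [if_neg g0, if_neg g2, e01, e12]
    have hane : a ≠ a + 1 + 1 := fun h => hne2 a h.symm
    rcases (hcyc _ _).mp (hA _ _ hane hl) with h | h
    · exact hne3 a h.symm
    · exact hne1 (a + 1) h
  -- at most two (consecutive) unlabeled vertices
  have key : ∀ p : Fin n, lab p = none → lab (p + 1) = none → False := by
    intro p hp0 hp1
    have huniq : ∀ r, lab r = none → r = p ∨ r = p + 1 := by
      intro r hr
      by_contra hc
      push_neg at hc
      obtain ⟨hr1, hr2⟩ := hc
      rcases (hcyc r p).mp (hA r p hr1 (hr.trans hp0.symm)) with h | h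
      · exact hr2 h
      · rcases (hcyc r (p + 1)).mp (hA r (p + 1) hr2 (hr.trans hp1.symm)) with h2 | h2
        · rw [h] at h2
          exact hne3 r h2.symm
        · exact hr1 (add_right_cancel h2).symm
    refine final (p + 1 + 1) ?_ ?_ ?_
    · intro h
      rcases huniq _ h with h' | h'
      · exact hne2 p h'
      · exact hne1 (p + 1) h'
    · intro h
      rcases huniq _ h with h' | h'
      · exact hne3 p h'
      · exact hne2 (p + 1) h'
    · intro h
      rcases huniq _ h with h' | h'
      · exact hne4 p h'
      · exact hne3 (p + 1) h'
  by_cases hex : ∃ t, lab t = none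
  · obtain ⟨t, ht⟩ := hex
    by_cases hex2 : ∃ s, s ≠ t ∧ lab s = none
    · obtain ⟨s, hst, hs⟩ := hex2
      rcases (hcyc t s).mp (hA t s (Ne.symm hst) (ht.trans hs.symm)) with h | h
      · exact key s hs (by rw [← h]; exact ht)
      · exact key t ht (by rw [← h]; exact hs)
    · push_neg at hex2
      exact final (t + 1) (hex2 _ (hne1 t)) (hex2 _ (hne2 t)) (hex2 _ (hne3 t))
  · push_neg at hex
    exact final 0 (hex _) (hex _) (hex _)
end

section
/- Let G be a finite simple graph and let p, q be positive integers. Suppose there is a family of q vertex subsets S_1, …, S_q of G such that each subgraph of G induced by S_t is perfect, and every vertex of G belongs to at least p of the sets S_1, …, S_q. Then QSTAB(G) ⊆ (q/p)·STAB(G). -/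
open SimpleGraph Pointwise

section PerfectGraphLP


section Aux

variable {W : Type*}

open Classical in
noncomputable def cw [Fintype W] (H : SimpleGraph W) (n : W → ℕ) : ℕ :=
  Finset.univ.sup fun Q : Finset W => if H.IsClique (Q : Set W) then ∑ v ∈ Q, n v else 0

open Classical in
lemma sum_le_cw [Fintype W] (H : SimpleGraph W) (n : W → ℕ) {Q : Finset W}
    (hQ : H.IsClique (Q : Set W)) : ∑ v ∈ Q, n v ≤ cw H n := by
  rw [cw]
  refine le_trans ?_ (Finset.le_sup (Finset.mem_univ Q))
  rw [if_pos hQ]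

open Classical in
lemma cw_le [Fintype W] (H : SimpleGraph W) (n : W → ℕ) {N : ℕ}
    (h : ∀ Q : Finset W, H.IsClique (Q : Set W) → ∑ v ∈ Q, n v ≤ N) : cw H n ≤ N := by
  apply Finset.sup_le
  intro Q _
  split_ifs with hc
  · exact h Q hc
  · exact Nat.zero_le N

lemma exists_cw [Fintype W] (H : SimpleGraph W) (n : W → ℕ) :
    ∃ Q : Finset W, H.IsClique (Q : Set W) ∧ ∑ v ∈ Q, n v = cw H n := by
  classical
  by_cases h0 : cw H n = 0
  · exact ⟨∅, by simp [SimpleGraph.IsClique], by simp [h0]⟩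
  · obtain ⟨Q, -, hQ⟩ := Finset.exists_mem_eq_sup (Finset.univ : Finset (Finset W))
      Finset.univ_nonempty (fun Q : Finset W =>
        if H.IsClique (Q : Set W) then ∑ v ∈ Q, n v else 0)
    rw [cw] at h0 ⊢
    rw [hQ] at h0 ⊢
    split_ifs at h0 ⊢ with hc
    · exact ⟨Q, hc, rfl⟩
    · exact absurd rfl h0

open Classical in
lemma pad_family {H : SimpleGraph W} {M N : ℕ} (hMN : M ≤ N) (A : Fin M → Set W)
    (hst : ∀ i, ∀ v ∈ A i, ∀ w ∈ A i, ¬ H.Adj v w) :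
    ∃ A' : Fin N → Set W, (∀ i, ∀ v ∈ A' i, ∀ w ∈ A' i, ¬ H.Adj v w) ∧
      ∀ v, (∑ i : Fin N, if v ∈ A' i then 1 else 0) =
        ∑ j : Fin M, if v ∈ A j then 1 else 0 := by
  refine ⟨fun i => if h : (i : ℕ) < M then A ⟨i, h⟩ else ∅, ?_, ?_⟩
  · intro i
    by_cases h : (i : ℕ) < M
    · simpa only [dif_pos h] using hst _
    · simp [dif_neg h]
  · intro v
    have h1 : (∑ i : Fin N, if v ∈ (if h : (i : ℕ) < M then A ⟨i, h⟩ else ∅) then (1:ℕ) else 0)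
        = ∑ i ∈ Finset.univ.map (Fin.castLEEmb hMN),
            (if v ∈ (if h : (i : ℕ) < M then A ⟨i, h⟩ else ∅) then (1:ℕ) else 0) := by
      refine (Finset.sum_subset (Finset.subset_univ _) ?_).symm
      intro i _ hi
      have hlt : ¬ ((i : ℕ) < M) := by
        intro hlt
        exact hi (Finset.mem_map.2 ⟨⟨(i : ℕ), hlt⟩, Finset.mem_univ _, by
          simp [Fin.castLEEmb, Fin.ext_iff]⟩)
      rw [dif_neg hlt]
      simp
    rw [h1, Finset.sum_map]
    refine Finset.sum_congr rfl fun j _ => ?_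
    have hlt : ((Fin.castLEEmb hMN j : Fin N) : ℕ) < M := by simp
    rw [dif_pos hlt]
    congr 1

open Classical in
lemma snoc_count {M : ℕ} (B : Fin M → Set W) (E : Set W) (v : W) :
    (∑ i : Fin (M + 1), if v ∈ (Fin.snoc B E : Fin (M+1) → Set W) i then 1 else 0) =
      (∑ j : Fin M, if v ∈ B j then 1 else 0) + (if v ∈ E then (1:ℕ) else 0) := by
  rw [Fin.sum_univ_castSucc]
  simp


open Classical in
lemma exists_stable_family_aux [Fintype W] (H : SimpleGraph W) (hH : H.IsPerfect) :
    ∀ T : ℕ, ∀ n : W → ℕ, ∑ v, n v = T →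
    ∃ A : Fin (cw H n) → Set W, (∀ i, ∀ v ∈ A i, ∀ w ∈ A i, ¬ H.Adj v w) ∧
      ∀ v, (∑ i, if v ∈ A i then 1 else 0) = n v := by
  intro T
  induction T using Nat.strong_induction_on with
  | _ T IH =>
  intro n hT
  by_cases hsm : ∀ v, n v ≤ 1
  -- BASE CASE: 0/1 weights, use perfection directly
  · set S' : Set W := {v | n v = 1} with hS'
    set k := (H.induce S').cliqueNum with hk
    have hcol : (H.induce S').Colorable k :=
      chromaticNumber_le_iff_colorable.mp (le_of_eq (hH S'))
    obtain ⟨C⟩ := hcol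
    -- k ≤ cw H n
    have hkle : k ≤ cw H n := by
      obtain ⟨s, hs⟩ := SimpleGraph.exists_isNClique_cliqueNum (G := H.induce S')
      set Q : Finset W := s.map (Function.Embedding.subtype _) with hQdef
      have hQcl : H.IsClique (Q : Set W) := by
        intro a ha b hb hab
        simp only [hQdef, Finset.coe_map, Set.mem_image, Finset.mem_coe] at ha hb
        obtain ⟨a', ha', rfl⟩ := ha
        obtain ⟨b', hb', rfl⟩ := hb
        have hne : a' ≠ b' := fun h => hab (by rw [h])
        exact hs.isClique ha' hb' hne
      have hsum : ∑ v ∈ Q, n v = k := by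
        rw [hQdef, Finset.sum_map]
        have : ∀ a' ∈ s, n ((Function.Embedding.subtype _) a') = 1 := by
          intro a' _
          exact a'.2
        rw [Finset.sum_congr rfl this]
        simp [hs.card_eq, hk]
      calc k = ∑ v ∈ Q, n v := hsum.symm
        _ ≤ cw H n := sum_le_cw H n hQcl
    -- the color classes
    obtain ⟨D, hD⟩ : ∃ D : Fin k → Set W, D = fun i => {w | ∃ hw : w ∈ S', C ⟨w, hw⟩ = i} :=
      ⟨_, rfl⟩
    have hDst : ∀ i, ∀ v ∈ D i, ∀ w ∈ D i, ¬ H.Adj v w := by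
      intro i v hv w hw hadj
      rw [hD] at hv hw
      obtain ⟨hv', hcv⟩ := hv
      obtain ⟨hw', hcw⟩ := hw
      have : (H.induce S').Adj ⟨v, hv'⟩ ⟨w, hw'⟩ := hadj
      exact C.valid this (hcv.trans hcw.symm)
    have hDcnt : ∀ v, (∑ i : Fin k, if v ∈ D i then 1 else 0) = n v := by
      intro v
      by_cases hv : v ∈ S'
      · have : ∀ i : Fin k, (if v ∈ D i then (1:ℕ) else 0) = if C ⟨v, hv⟩ = i then 1 else 0 := by
          intro i
          congr 1
          rw [hD]
          simp only [Set.mem_setOf_eq, eq_iff_iff]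
          exact ⟨fun ⟨h, hc⟩ => hc, fun hc => ⟨hv, hc⟩⟩
        rw [Finset.sum_congr rfl (fun i _ => this i), Finset.sum_ite_eq]
        simp [hv.out]
      · have hnv : n v = 0 := by
          have := hsm v
          have : n v ≠ 1 := hv
          omega
        have h0 : (∑ i : Fin k, if v ∈ D i then 1 else 0) = 0 := by
          refine Finset.sum_eq_zero fun i _ => ?_
          rw [if_neg]
          rw [hD]
          exact fun ⟨h, _⟩ => hv h
        omega
    obtain ⟨A, hAst, hAcnt⟩ := pad_family (H := H) hkle D hDst
    exact ⟨A, hAst, fun v => (hAcnt v).trans (hDcnt v)⟩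
  -- INDUCTIVE STEP
  · push_neg at hsm
    obtain ⟨v0, hv0⟩ := hsm
    set m : W → ℕ := Function.update n v0 (n v0 - 1) with hm
    have hpoint : ∀ v, n v = m v + (if v = v0 then 1 else 0) := by
      intro v
      by_cases h : v = v0
      · subst h; simp [hm, Function.update_self]; omega
      · simp [hm, Function.update_of_ne h, h]
    have hmv0 : m v0 = n v0 - 1 := by simp [hm]
    have hmsum : ∑ v, m v + 1 = T := by
      have h1 : ∑ v, n v = ∑ v, (m v + (if v = v0 then 1 else 0)) :=
        Finset.sum_congr rfl fun v _ => hpoint v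
      rw [Finset.sum_add_distrib, Finset.sum_ite_eq' Finset.univ v0 (fun _ => 1)] at h1
      simp at h1
      omega
    obtain ⟨B, hBst, hBcnt⟩ := IH (∑ v, m v) (by omega) m rfl
    -- cw relations
    have hcw_mono : cw H m ≤ cw H n := by
      apply cw_le
      intro Q hQ
      calc ∑ v ∈ Q, m v ≤ ∑ v ∈ Q, n v := Finset.sum_le_sum fun v _ => by rw [hpoint v]; omega
        _ ≤ cw H n := sum_le_cw H n hQ
    have hcw_succ : cw H n ≤ cw H m + 1 := by
      apply cw_le
      intro Q hQ
      have : ∑ v ∈ Q, n v = ∑ v ∈ Q, m v + (if v0 ∈ Q then 1 else 0) := by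
        rw [Finset.sum_congr rfl (fun v _ => hpoint v), Finset.sum_add_distrib,
          Finset.sum_ite_eq' Q v0 (fun _ => 1)]
      have h2 : ∑ v ∈ Q, m v ≤ cw H m := sum_le_cw H m hQ
      split_ifs at this <;> omega
    have hcwm1 : 1 ≤ cw H m := by
      have hcl : H.IsClique (({v0} : Finset W) : Set W) := by
        simp [SimpleGraph.IsClique, Set.pairwise_singleton]
      have := sum_le_cw H m hcl
      simp at this
      omega
    rcases (by omega : cw H n = cw H m + 1 ∨ cw H n = cw H m) with hcase | hcase
    -- Case 1 : add {v0} as a new class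
    · have hsingle : ∀ i, ∀ v ∈ (Fin.snoc B ({v0} : Set W) : Fin (cw H m + 1) → Set W) i,
          ∀ w ∈ (Fin.snoc B ({v0} : Set W) : Fin (cw H m + 1) → Set W) i, ¬ H.Adj v w := by
        intro i
        refine Fin.lastCases ?_ ?_ i
        · simp only [Fin.snoc_last]
          rintro v rfl w rfl
          exact fun h => H.loopless.irrefl _ h
        · intro j
          simp only [Fin.snoc_castSucc]
          exact hBst j
      have hcnt : ∀ v, (∑ i : Fin (cw H m + 1),
          if v ∈ (Fin.snoc B ({v0} : Set W) : Fin (cw H m + 1) → Set W) i then 1 else 0) = n v := by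
        intro v
        rw [snoc_count, hBcnt v, hpoint v]
        simp [Set.mem_singleton_iff]
      obtain ⟨A, hAst, hAcnt⟩ := pad_family (H := H) (le_of_eq hcase.symm) _ hsingle
      exact ⟨A, hAst, fun v => (hAcnt v).trans (hcnt v)⟩
    -- Case 2 : modify an existing class
    · have hnomax : ∀ Q : Finset W, H.IsClique (Q : Set W) → v0 ∈ Q → ∑ v ∈ Q, m v < cw H m := by
        intro Q hQ hv0Q
        rcases lt_or_eq_of_le (sum_le_cw H m hQ) with h | h
        · exact h
        · exfalso
          have h1 : ∑ v ∈ Q, n v = ∑ v ∈ Q, m v + 1 := by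
            rw [Finset.sum_congr rfl (fun v _ => hpoint v), Finset.sum_add_distrib,
              Finset.sum_ite_eq' Q v0 (fun _ => 1), if_pos hv0Q]
          have h2 := sum_le_cw H n hQ
          omega
      have hex : ∃ i, v0 ∈ B i := by
        by_contra hno
        push_neg at hno
        have h0 : (∑ i : Fin (cw H m), if v0 ∈ B i then 1 else 0) = 0 :=
          Finset.sum_eq_zero fun i _ => if_neg (hno i)
        rw [hBcnt v0] at h0
        omega
      obtain ⟨i0, hi0⟩ := hex
      have hAm : ∀ u ∈ B i0, 1 ≤ m u := by
        intro u hu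
        rw [← hBcnt u]
        calc (1:ℕ) = if u ∈ B i0 then 1 else 0 := by rw [if_pos hu]
          _ ≤ ∑ i : Fin (cw H m), if u ∈ B i then 1 else 0 :=
            Finset.single_le_sum (f := fun i => if u ∈ B i then (1:ℕ) else 0)
              (fun i _ => Nat.zero_le _) (Finset.mem_univ i0)
      obtain ⟨m'', hm''⟩ : ∃ m'' : W → ℕ,
          m'' = fun u => if u ∈ B i0 ∧ u ≠ v0 then m u - 1 else m u := ⟨_, rfl⟩
      have hm''le : ∀ u, m'' u ≤ m u := by
        intro u; rw [hm'']; dsimp only; split_ifs <;> omega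
      have hm''cl : ∀ Q : Finset W, H.IsClique (Q : Set W) → ∑ v ∈ Q, m'' v ≤ cw H m - 1 := by
        intro Q hQ
        have hle : ∑ v ∈ Q, m'' v ≤ ∑ v ∈ Q, m v := Finset.sum_le_sum fun v _ => hm''le v
        rcases lt_or_eq_of_le (sum_le_cw H m hQ) with hlt | heq
        · omega
        · have hv0Q : v0 ∉ Q := fun hmem => absurd heq (Nat.ne_of_lt (hnomax Q hQ hmem))
          have hcard : ∀ i : Fin (cw H m), (∑ u ∈ Q, if u ∈ B i then 1 else 0) ≤ 1 := by
            intro i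
            rw [← Finset.card_filter]
            apply Finset.card_le_one.mpr
            intro a ha b hb
            simp only [Finset.mem_filter] at ha hb
            by_contra hab
            exact hBst i a ha.2 b hb.2 (hQ ha.1 hb.1 hab)
          have hswap : (∑ i : Fin (cw H m), ∑ u ∈ Q, if u ∈ B i then 1 else 0) = cw H m := by
            rw [Finset.sum_comm]
            calc (∑ u ∈ Q, ∑ i : Fin (cw H m), if u ∈ B i then 1 else 0)
                = ∑ u ∈ Q, m u := Finset.sum_congr rfl fun u _ => hBcnt u
              _ = cw H m := heq
          have hall : (∑ u ∈ Q, if u ∈ B i0 then 1 else 0) = 1 := by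
            have hone : (∑ i : Fin (cw H m), ∑ u ∈ Q, if u ∈ B i then 1 else 0)
                = ∑ _i : Fin (cw H m), 1 := by
              rw [hswap]; simp
            exact (Finset.sum_eq_sum_iff_of_le (fun i _ => hcard i)).mp hone i0
              (Finset.mem_univ i0)
          have hexu : ∃ u ∈ Q, u ∈ B i0 := by
            by_contra hno
            push_neg at hno
            rw [Finset.sum_eq_zero (fun u hu => if_neg (hno u hu))] at hall
            omega
          obtain ⟨u, huQ, huA⟩ := hexu
          have hlt : ∑ v ∈ Q, m'' v < ∑ v ∈ Q, m v := by
            apply Finset.sum_lt_sum (fun v _ => hm''le v)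
            refine ⟨u, huQ, ?_⟩
            rw [hm'']
            dsimp only
            rw [if_pos ⟨huA, fun h => hv0Q (h ▸ huQ)⟩]
            have := hAm u huA
            omega
          omega
      have hm''sum : ∑ v, m'' v < T := by
        have := Finset.sum_le_sum (f := m'') (g := m) (s := Finset.univ)
          (fun v _ => hm''le v)
        omega
      obtain ⟨D, hDst, hDcnt⟩ := IH (∑ v, m'' v) hm''sum m'' rfl
      have hcwm'' : cw H m'' ≤ cw H m - 1 := cw_le H m'' hm''cl
      obtain ⟨D', hD'st, hD'cnt⟩ := pad_family (H := H) hcwm'' D hDst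
      have hsnocst : ∀ i, ∀ v ∈ (Fin.snoc D' (B i0) : Fin (cw H m - 1 + 1) → Set W) i,
          ∀ w ∈ (Fin.snoc D' (B i0) : Fin (cw H m - 1 + 1) → Set W) i, ¬ H.Adj v w := by
        intro i
        refine Fin.lastCases ?_ ?_ i
        · simp only [Fin.snoc_last]
          exact hBst i0
        · intro j
          simp only [Fin.snoc_castSucc]
          exact hD'st j
      have hsnoccnt : ∀ v, (∑ i : Fin (cw H m - 1 + 1),
          if v ∈ (Fin.snoc D' (B i0) : Fin (cw H m - 1 + 1) → Set W) i then 1 else 0)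
          = n v := by
        intro v
        rw [snoc_count, hD'cnt v, hDcnt v, hm'']
        dsimp only
        by_cases hvv : v = v0
        · subst hvv
          rw [if_neg (by simp), if_pos hi0, hpoint v]
          simp
        · by_cases hvB : v ∈ B i0
          · rw [if_pos ⟨hvB, hvv⟩, if_pos hvB, hpoint v, if_neg hvv]
            have := hAm v hvB
            omega
          · rw [if_neg (fun h => hvB h.1), if_neg hvB, hpoint v, if_neg hvv]
      obtain ⟨A, hAst, hAcnt⟩ := pad_family (H := H)
        (show cw H m - 1 + 1 ≤ cw H n by omega) _ hsnocst
      exact ⟨A, hAst, fun v => (hAcnt v).trans (hsnoccnt v)⟩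


open Classical in
lemma exists_stable_family [Fintype W] (H : SimpleGraph W) (hH : H.IsPerfect)
    (n : W → ℕ) (N : ℕ)
    (hcl : ∀ Q : Finset W, H.IsClique (Q : Set W) → ∑ v ∈ Q, n v ≤ N) :
    ∃ A : Fin N → Set W, (∀ i, ∀ v ∈ A i, ∀ w ∈ A i, ¬ H.Adj v w) ∧
      ∀ v, (∑ i : Fin N, if v ∈ A i then 1 else 0) = n v := by
  obtain ⟨B, hBst, hBcnt⟩ := exists_stable_family_aux H hH (∑ v, n v) n rfl
  obtain ⟨A, hAst, hAcnt⟩ := pad_family (cw_le H n hcl) B hBst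
  exact ⟨A, hAst, fun v => (hAcnt v).trans (hBcnt v)⟩

end Aux

open Classical in
lemma ratcore {V : Type*} [Fintype V] (G : SimpleGraph V) (p q N : ℕ)
    (hq : 0 < q) (hN : 0 < N) (S : Fin q → Set V)
    (hperf : ∀ t : Fin q, (G.induce (S t)).IsPerfect)
    (hcover : ∀ v : V, p ≤ Nat.card {t : Fin q // v ∈ S t})
    (n : V → ℕ) (hclq : ∀ Q : Finset V, G.IsClique (Q : Set V) → ∑ v ∈ Q, n v ≤ N) :
    (fun v => (p : ℝ) * n v / (q * N)) ∈ STAB G := by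
  have hchoose : ∀ v : V, ∃ P : Finset (Fin q),
      P ⊆ Finset.univ.filter (fun t => v ∈ S t) ∧ P.card = p := by
    intro v
    apply Finset.exists_subset_card_eq
    have h := hcover v
    rwa [Nat.card_eq_fintype_card, Fintype.card_subtype] at h
  choose P hPsub hPcard using hchoose
  have hPS : ∀ v t, t ∈ P v → v ∈ S t := fun v t ht => by
    have h := hPsub v ht
    simp only [Finset.mem_filter] at h
    exact h.2
  have hfam : ∀ t : Fin q, ∃ A : Fin N → Set (S t),
      (∀ i, ∀ v ∈ A i, ∀ w ∈ A i, ¬ (G.induce (S t)).Adj v w) ∧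
      ∀ w : S t, (∑ i : Fin N, if w ∈ A i then 1 else 0)
        = (if t ∈ P (w : V) then n (w : V) else 0) := by
    intro t
    haveI : Fintype (S t) := Fintype.ofFinite _
    apply exists_stable_family _ (hperf t)
    intro Q' hQ'
    have hQcl : G.IsClique ((Q'.map (Function.Embedding.subtype _) : Finset V) : Set V) := by
      intro a ha b hb hab
      simp only [Finset.coe_map, Set.mem_image, Finset.mem_coe] at ha hb
      obtain ⟨a', ha', rfl⟩ := ha
      obtain ⟨b', hb', rfl⟩ := hb
      have hne : a' ≠ b' := fun h => hab (by rw [h])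
      exact hQ' ha' hb' hne
    calc ∑ w ∈ Q', (if t ∈ P (w : V) then n (w : V) else 0)
        ≤ ∑ w ∈ Q', n (w : V) := Finset.sum_le_sum fun w _ => by split_ifs <;> omega
      _ = ∑ v ∈ Q'.map (Function.Embedding.subtype _), n v :=
        (Finset.sum_map Q' (Function.Embedding.subtype _) n).symm
      _ ≤ N := hclq _ hQcl
  choose A hAst hAcnt using hfam
  have hcnt : ∀ v : V, (∑ ti : Fin q × Fin N,
      if v ∈ (Subtype.val '' (A ti.1 ti.2) : Set V) then 1 else 0) = p * n v := by
    intro v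
    rw [Fintype.sum_prod_type]
    have hterm : ∀ t : Fin q,
        (∑ i : Fin N, if v ∈ (Subtype.val '' (A t i) : Set V) then 1 else 0)
        = (if t ∈ P v then n v else 0) := by
      intro t
      by_cases hv : v ∈ S t
      · have hiff : ∀ i : Fin N,
            (v ∈ (Subtype.val '' (A t i) : Set V)) ↔ (⟨v, hv⟩ : S t) ∈ A t i := by
          intro i
          constructor
          · rintro ⟨w, hw, hwv⟩
            have : w = (⟨v, hv⟩ : S t) := Subtype.ext hwv
            rwa [this] at hw
          · intro h
            exact ⟨⟨v, hv⟩, h, rfl⟩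
        calc (∑ i : Fin N, if v ∈ (Subtype.val '' (A t i) : Set V) then 1 else 0)
            = ∑ i : Fin N, if (⟨v, hv⟩ : S t) ∈ A t i then 1 else 0 :=
              Finset.sum_congr rfl fun i _ => by
                rw [if_congr (hiff i) rfl rfl]
          _ = if t ∈ P v then n v else 0 := hAcnt t ⟨v, hv⟩
      · have h1 : ∀ i : Fin N, v ∉ (Subtype.val '' (A t i) : Set V) := by
          rintro i ⟨w, _, hwv⟩
          exact hv (hwv ▸ w.2)
        rw [Finset.sum_eq_zero (fun i _ => if_neg (h1 i)), if_neg (fun h => hv (hPS v t h))]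
    rw [Finset.sum_congr rfl (fun t _ => hterm t), Finset.sum_ite_mem,
      Finset.univ_inter, Finset.sum_const, hPcard v, smul_eq_mul]
  -- the convex combination
  have hmem : ∀ ti : Fin q × Fin N,
      ((Subtype.val '' (A ti.1 ti.2) : Set V).indicator (fun _ => (1:ℝ)))
        ∈ {x : V → ℝ | ∃ Ss : Set V, (∀ v ∈ Ss, ∀ w ∈ Ss, ¬ G.Adj v w) ∧
            x = Ss.indicator (fun _ => (1 : ℝ))} := by
    intro ti
    refine ⟨_, ?_, rfl⟩
    rintro v ⟨v', hv', rfl⟩ w ⟨w', hw', rfl⟩ hadj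
    exact hAst ti.1 ti.2 v' hv' w' hw' hadj
  have hcm := Finset.centerMass_mem_convexHull (t := (Finset.univ : Finset (Fin q × Fin N)))
    (w := fun _ => (1:ℝ))
    (z := fun ti => (Subtype.val '' (A ti.1 ti.2) : Set V).indicator (fun _ => (1:ℝ)))
    (fun _ _ => zero_le_one)
    (by
      rw [Finset.sum_const, nsmul_eq_mul, mul_one, Finset.card_univ, Fintype.card_prod,
        Fintype.card_fin, Fintype.card_fin]
      positivity)
    (fun ti _ => hmem ti)
  rw [STAB]
  convert hcm using 1
  rw [Finset.centerMass]
  funext v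
  simp only [Finset.sum_const, nsmul_eq_mul, mul_one, Finset.card_univ, Fintype.card_prod,
    Fintype.card_fin, Pi.smul_apply, Finset.sum_apply, one_smul, smul_eq_mul]
  have hsum : (∑ ti : Fin q × Fin N,
      ((Subtype.val '' (A ti.1 ti.2) : Set V).indicator (fun _ => (1:ℝ))) v)
      = ((p * n v : ℕ) : ℝ) := by
    rw [← hcnt v]
    push_cast
    refine Finset.sum_congr rfl fun ti _ => ?_
    rw [Set.indicator_apply]
  rw [hsum]
  push_cast
  field_simp

end PerfectGraphLP

theorem stmt16 {V : Type*} [Fintype V] (G : SimpleGraph V) (p q : ℕ)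
    (hp : 0 < p) (hq : 0 < q) (S : Fin q → Set V)
    (hperf : ∀ t : Fin q, (G.induce (S t)).IsPerfect)
    (hcover : ∀ v : V, p ≤ Nat.card {t : Fin q // v ∈ S t}) :
    QSTAB G ⊆ ((q : ℝ) / p) • STAB G := by
  intro x hx
  obtain ⟨hx0, hxcl⟩ := hx
  have hp' : (0:ℝ) < p := by exact_mod_cast hp
  have hq' : (0:ℝ) < q := by exact_mod_cast hq
  have hc : ((q:ℝ)/p) ≠ 0 := by positivity
  rw [Set.mem_smul_set_iff_inv_smul_mem₀ hc]
  have hfin : ({y : V → ℝ | ∃ S' : Set V, (∀ v ∈ S', ∀ w ∈ S', ¬ G.Adj v w) ∧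
      y = S'.indicator (fun _ => (1 : ℝ))}).Finite := by
    apply Set.Finite.subset (Set.finite_range (fun S' : Set V => S'.indicator (fun _ => (1:ℝ))))
    rintro y ⟨S', -, rfl⟩
    exact ⟨S', rfl⟩
  have hclosed : IsClosed (STAB G) := hfin.isClosed_convexHull (𝕜 := ℝ)
  rw [← hclosed.closure_eq]
  rw [Metric.mem_closure_iff]
  intro ε hε
  obtain ⟨K, hK⟩ := exists_nat_gt ((((p:ℝ)/q) + 1) / ε)
  have hK0' : (0:ℝ) < K := lt_trans (by positivity) hK
  have hK0 : 0 < K := by exact_mod_cast hK0'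
  set n : V → ℕ := fun v => (⌊x v * K⌋).toNat with hn
  have hnle : ∀ v, (n v : ℝ) ≤ x v * K := by
    intro v
    have hfl : 0 ≤ ⌊x v * K⌋ := Int.floor_nonneg.2 (mul_nonneg (hx0 v) (Nat.cast_nonneg K))
    have hcast : ((n v : ℕ) : ℝ) = ((⌊x v * K⌋ : ℤ) : ℝ) := by
      rw [hn]
      exact_mod_cast congrArg (Int.cast : ℤ → ℝ) (Int.toNat_of_nonneg hfl)
    rw [hcast]
    exact Int.floor_le _
  have hngt : ∀ v, x v * K - 1 < (n v : ℝ) := by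
    intro v
    have h1 : x v * K - 1 < (⌊x v * K⌋ : ℝ) := Int.sub_one_lt_floor _
    have h2 : ((⌊x v * K⌋ : ℤ) : ℝ) ≤ ((⌊x v * K⌋.toNat : ℕ) : ℝ) := by
      exact_mod_cast Int.self_le_toNat _
    rw [hn]
    dsimp only
    linarith
  have hclq : ∀ Q : Finset V, G.IsClique (Q : Set V) → ∑ v ∈ Q, n v ≤ K := by
    intro Q hQ
    have hr : ((∑ v ∈ Q, n v : ℕ) : ℝ) ≤ (K : ℝ) := by
      push_cast
      calc ∑ v ∈ Q, (n v : ℝ) ≤ ∑ v ∈ Q, x v * K :=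
            Finset.sum_le_sum fun v _ => hnle v
        _ = (∑ v ∈ Q, x v) * K := (Finset.sum_mul _ _ _).symm
        _ ≤ 1 * K := mul_le_mul_of_nonneg_right (hxcl Q hQ) (Nat.cast_nonneg K)
        _ = K := one_mul _
    exact_mod_cast hr
  have hz := ratcore G p q K hq hK0 S hperf hcover n hclq
  refine ⟨_, hz, ?_⟩
  rw [dist_pi_lt_iff hε]
  intro v
  rw [Real.dist_eq]
  have h1 : (((q:ℝ)/p)⁻¹ • x) v = ((p:ℝ)/q) * x v := by
    simp only [Pi.smul_apply, smul_eq_mul, inv_div]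
  rw [h1]
  have hb1 : (n v : ℝ) ≤ x v * K := hnle v
  have hb2 : x v * K - 1 < (n v : ℝ) := hngt v
  have hKeps : ((p:ℝ)/q + 1) < ε * K := by
    rw [div_lt_iff₀ hε] at hK
    calc ((p:ℝ)/q + 1) < K * ε := hK
      _ = ε * K := mul_comm _ _
  have key : (p:ℝ)/q * x v - (p:ℝ) * n v / (q * K)
      = (p:ℝ) * (x v * K - n v) / (q * K) := by
    field_simp
  have hdlt : x v * K - (n v : ℝ) < 1 := by linarith
  have hdge : (0:ℝ) ≤ x v * K - n v := by linarith
  have h0 : (0:ℝ) ≤ (p:ℝ) * (x v * K - n v) / (q * K) :=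
    div_nonneg (mul_nonneg (le_of_lt hp') hdge) (by positivity)
  have h2 : (p:ℝ) * (x v * K - n v) / (q * K) < ε := by
    rw [div_lt_iff₀ (by positivity)]
    have hKq : (p:ℝ) + q < ε * K * q := by
      have h := mul_lt_mul_of_pos_right hKeps hq'
      calc (p:ℝ) + q = ((p:ℝ)/q + 1) * q := by field_simp
        _ < ε * K * q := h
    nlinarith [mul_lt_mul_of_pos_left hdlt hp']
  rw [key, abs_of_nonneg h0]
  exact h2
end

section
/- In the enhanced conflict graph G_{2,3}, the five vertices u_{11}, b_{12}, u_{22}, u_{23}, b_{13} induce a chordless 5-cycle (in the cyclic order u_{11} ~ b_{12} ~ u_{22} ~ u_{23} ~ b_{13} ~ u_{11}); consequently G_{2,3} is not a perfect graph. -/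
open SimpleGraph Pointwise

instance : DecidableRel (ECG 2 3).Adj := fun v w =>
  inferInstanceAs (Decidable (v ≠ w ∧
    ((v.2.1 = w.2.1 ∧ (v.1 = false ∨ w.1 = false)) ∨
     (v.2.2 = w.2.2 ∧ v.2.1 ≠ w.2.1))))

/-- The five-vertex hole set. -/
def holeSet : Set (CGVert 2 3) :=
  {(false, 0, 0), (true, 0, 1), (false, 1, 1), (false, 1, 2), (true, 0, 2)}

instance : Fintype holeSet := by unfold holeSet; infer_instance

def holeFun : Fin 5 → CGVert 2 3 :=
  ![(false, 0, 0), (true, 0, 1), (false, 1, 1), (false, 1, 2), (true, 0, 2)]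

lemma holeFun_mem (i : Fin 5) : holeFun i ∈ holeSet := by
  fin_cases i <;> simp [holeFun, holeSet]

def holeEquiv : Fin 5 ≃ holeSet where
  toFun i := ⟨holeFun i, holeFun_mem i⟩
  invFun v :=
    if v.1 = (false, 0, 0) then 0 else
    if v.1 = (true, 0, 1) then 1 else
    if v.1 = (false, 1, 1) then 2 else
    if v.1 = (false, 1, 2) then 3 else 4
  left_inv i := by fin_cases i <;> rfl
  right_inv v := by
    obtain ⟨v, hv⟩ := v
    rcases hv with h | h | h | h | h <;> subst h <;> rfl

instance : DecidableRel ((ECG 2 3).induce holeSet).Adj := fun a b =>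
  inferInstanceAs (Decidable ((ECG 2 3).Adj a.1 b.1))

def holeIso' : cycleGraph 5 ≃g (ECG 2 3).induce holeSet :=
  ⟨holeEquiv, by
    have : ∀ a b : Fin 5,
        ((ECG 2 3).induce holeSet).Adj (holeEquiv a) (holeEquiv b) ↔ (cycleGraph 5).Adj a b := by
      decide
    intro a b
    exact this a b⟩

def holeIso : (ECG 2 3).induce holeSet ≃g cycleGraph 5 := holeIso'.symm

lemma cycle5_not_colorable_two : ¬ (cycleGraph 5).Colorable 2 := by
  rintro ⟨c⟩
  have key : ∀ i j : Fin 5, (cycleGraph 5).Adj i j → (c i).val ≠ (c j).val := by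
    intro i j h hval
    exact c.valid h (Fin.ext hval)
  have h01 := key 0 1 (by decide)
  have h12 := key 1 2 (by decide)
  have h23 := key 2 3 (by decide)
  have h34 := key 3 4 (by decide)
  have h40 := key 4 0 (by decide)
  have b0 := (c 0).isLt
  have b1 := (c 1).isLt
  have b2 := (c 2).isLt
  have b3 := (c 3).isLt
  have b4 := (c 4).isLt
  omega

lemma cycle5_cliqueFree : (cycleGraph 5).CliqueFree 3 := by
  have : ∀ t : Finset (Fin 5), ¬ (cycleGraph 5).IsNClique 3 t := by decide
  exact this

def hv0 : holeSet := ⟨(false, 0, 0), by simp [holeSet]⟩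
def hv1 : holeSet := ⟨(true, 0, 1), by simp [holeSet]⟩

theorem stmt17 :
    (ECG 2 3).Adj (false, 0, 0) (true, 0, 1) ∧
    (ECG 2 3).Adj (true, 0, 1) (false, 1, 1) ∧
    (ECG 2 3).Adj (false, 1, 1) (false, 1, 2) ∧
    (ECG 2 3).Adj (false, 1, 2) (true, 0, 2) ∧
    (ECG 2 3).Adj (true, 0, 2) (false, 0, 0) ∧
    ¬ (ECG 2 3).Adj (false, 0, 0) (false, 1, 1) ∧
    ¬ (ECG 2 3).Adj (false, 0, 0) (false, 1, 2) ∧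
    ¬ (ECG 2 3).Adj (true, 0, 1) (false, 1, 2) ∧
    ¬ (ECG 2 3).Adj (true, 0, 1) (true, 0, 2) ∧
    ¬ (ECG 2 3).Adj (false, 1, 1) (true, 0, 2) ∧
    Nonempty ((ECG 2 3).induce
      ({(false, 0, 0), (true, 0, 1), (false, 1, 1), (false, 1, 2), (true, 0, 2)} :
        Set (CGVert 2 3)) ≃g cycleGraph 5) ∧
    ¬ (ECG 2 3).IsPerfect := by
  refine ⟨by decide, by decide, by decide, by decide, by decide, by decide, by decide,
    by decide, by decide, by decide, ⟨holeIso⟩, ?_⟩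
  intro hperf
  have h := hperf holeSet
  -- clique number of the induced 5-cycle is 2
  have hfree : ((ECG 2 3).induce holeSet).CliqueFree 3 :=
    cycle5_cliqueFree.comap holeIso.toEmbedding.isContained
  have hle : ((ECG 2 3).induce holeSet).cliqueNum ≤ 2 := by
    by_contra hlt
    push_neg at hlt
    obtain ⟨s, hs⟩ := ((ECG 2 3).induce holeSet).exists_isNClique_cliqueNum
    exact (hfree.mono (by omega)) s hs
  have hne : hv0 ≠ hv1 := by decide
  have hadj : ((ECG 2 3).induce holeSet).Adj hv0 hv1 := by decide
  have hclique : ((ECG 2 3).induce holeSet).IsClique (({hv0, hv1} : Finset holeSet) : Set holeSet) := by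
    rw [Finset.coe_pair, SimpleGraph.isClique_pair]
    exact fun _ => hadj
  have hge : 2 ≤ ((ECG 2 3).induce holeSet).cliqueNum := by
    have := SimpleGraph.IsClique.card_le_cliqueNum (tc := hclique)
    rwa [Finset.card_pair hne] at this
  have hcn : ((ECG 2 3).induce holeSet).cliqueNum = 2 := le_antisymm hle hge
  rw [hcn] at h
  have hcol : ((ECG 2 3).induce holeSet).Colorable 2 :=
    SimpleGraph.chromaticNumber_le_iff_colorable.mp (by rw [h])
  exact cycle5_not_colorable_two (hcol.of_hom holeIso.symm.toEmbedding.toHom)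
end
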